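/- arXiv:0901.4616 — 3 statements merged into one kernel-verified Lean document; each statement's English description precedes it below -/
import Mathlib

section
/- Let (X_t) be a reversible irreducible Markov chain on a countable state space V with stationary measure π of infinite total mass and transition matrix P, and suppose the bottom of the spectrum of I−P on ℓ²(π) is at least λ₁ > 0, i.e. ⟨f,(I−P)f⟩ ≥ λ₁⟨f,f⟩ for all f ∈ ℓ²(π). Then for any nonempty set A ⊆ V with π(A) < ∞, starting the chain from the measure π_A = π(·∩A)/π(A), the probability that the chain never returns to A after time 0 is at least λ₁. -/
open MeasureTheory

/-- `P` is a stochastic transition kernel on the countable state space `V`. -/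
def IsTransitionKernel {V : Type*} (P : V → V → ℝ) : Prop :=
  (∀ x y, 0 ≤ P x y) ∧ ∀ x, HasSum (P x) 1

/-- The chain with kernel `P` is irreducible. -/
def KernelIrreducible {V : Type*} (P : V → V → ℝ) : Prop :=
  ∀ x y, Relation.ReflTransGen (fun a b => 0 < P a b) x y

/-- `π` is a reversing (hence stationary) measure for `P`, with positive weights. -/
def IsReversing {V : Type*} (P : V → V → ℝ) (π : V → ℝ) : Prop :=
  (∀ x, 0 < π x) ∧ ∀ x y, π x * P x y = π y * P y x

open scoped Classical in
/-- `μ x` is the law on path space `ℕ → V` of the Markov chain with transition kernel `P`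
started at `x`: cylinder sets have the product probabilities. -/
def IsMarkovPathLaw {V : Type*} [MeasurableSpace V] (P : V → V → ℝ)
    (μ : V → Measure (ℕ → V)) : Prop :=
  (∀ x, IsProbabilityMeasure (μ x)) ∧
    ∀ (x : V) (n : ℕ) (path : ℕ → V),
      μ x {ω | ∀ i ≤ n, ω i = path i} =
        (if path 0 = x then 1 else 0) *
          ∏ i ∈ Finset.range n, ENNReal.ofReal (P (path i) (path (i + 1)))

/-- `⟨f, (I-P) f⟩ ≥ lam ⟨f, f⟩` for all `f ∈ ℓ²(π)`: the bottom of the spectrum of `I - P`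
is at least `lam`. -/
def SpectralGapLB {V : Type*} (P : V → V → ℝ) (π : V → ℝ) (lam : ℝ) : Prop :=
  ∀ f : V → ℝ, Summable (fun x => π x * f x ^ 2) →
    lam * ∑' x, π x * f x ^ 2 ≤ ∑' x, π x * f x * (f x - ∑' y, P x y * f y)


open scoped Classical ENNReal
namespace Stmt0Aux

variable {V : Type*}

noncomputable def Pf (P : V → V → ℝ) (f : V → ℝ) (x : V) : ℝ := ∑' y, P x y * f y

noncomputable def hfun (P : V → V → ℝ) (A : Set V) : ℕ → V → ℝ
  | 0 => fun x => if x ∈ A then 1 else 0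
  | n + 1 => fun x => if x ∈ A then 1 else Pf P (hfun P A n) x

variable {P : V → V → ℝ} {π : V → ℝ} {A : Set V}

lemma sumP (hP : IsTransitionKernel P) (x : V) : Summable (P x) := (hP.2 x).summable

lemma tsumP (hP : IsTransitionKernel P) (x : V) : ∑' y, P x y = 1 := (hP.2 x).tsum_eq

lemma Ple1 (hP : IsTransitionKernel P) (x y : V) : P x y ≤ 1 := by
  rw [← tsumP hP x]
  exact Summable.le_tsum (sumP hP x) y fun z _ => hP.1 x z

lemma summable_mul (hP : IsTransitionKernel P) {f : V → ℝ}
    (h0 : ∀ y, 0 ≤ f y) (h1 : ∀ y, f y ≤ 1) (x : V) :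
    Summable fun y => P x y * f y := by
  refine Summable.of_nonneg_of_le (fun y => mul_nonneg (hP.1 x y) (h0 y))
    (fun y => ?_) (sumP hP x)
  calc P x y * f y ≤ P x y * 1 := by
        exact mul_le_mul_of_nonneg_left (h1 y) (hP.1 x y)
    _ = P x y := mul_one _

lemma Pf_nonneg (hP : IsTransitionKernel P) {f : V → ℝ} (h0 : ∀ y, 0 ≤ f y) (x : V) :
    0 ≤ Pf P f x :=
  tsum_nonneg fun y => mul_nonneg (hP.1 x y) (h0 y)

lemma Pf_le_one (hP : IsTransitionKernel P) {f : V → ℝ}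
    (h0 : ∀ y, 0 ≤ f y) (h1 : ∀ y, f y ≤ 1) (x : V) : Pf P f x ≤ 1 := by
  have := Summable.tsum_le_tsum (f := fun y => P x y * f y) (g := P x)
    (fun y => by
      calc P x y * f y ≤ P x y * 1 := mul_le_mul_of_nonneg_left (h1 y) (hP.1 x y)
        _ = P x y := mul_one _)
    (summable_mul hP h0 h1 x) (sumP hP x)
  simpa [Pf, tsumP hP x] using this

lemma Pf_mono (hP : IsTransitionKernel P) {f g : V → ℝ}
    (f0 : ∀ y, 0 ≤ f y) (g0 : ∀ y, 0 ≤ g y) (g1 : ∀ y, g y ≤ 1)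
    (hfg : ∀ y, f y ≤ g y) (x : V) : Pf P f x ≤ Pf P g x :=
  Summable.tsum_le_tsum (fun y => mul_le_mul_of_nonneg_left (hfg y) (hP.1 x y))
    (summable_mul hP f0 (fun y => (hfg y).trans (g1 y)) x)
    (summable_mul hP g0 g1 x)

lemma hfun_mem (hP : IsTransitionKernel P) (n : ℕ) (x : V) :
    0 ≤ hfun P A n x ∧ hfun P A n x ≤ 1 := by
  induction n generalizing x with
  | zero => by_cases hx : x ∈ A <;> simp [hfun, hx]
  | succ n ih =>
    by_cases hx : x ∈ A
    · simp [hfun, hx]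
    · simpa [hfun, hx] using
        ⟨Pf_nonneg hP (fun y => (ih y).1) x,
         Pf_le_one hP (fun y => (ih y).1) (fun y => (ih y).2) x⟩

lemma hfun_nonneg (hP : IsTransitionKernel P) (n : ℕ) (x : V) : 0 ≤ hfun P A n x :=
  (hfun_mem hP n x).1

lemma hfun_le_one (hP : IsTransitionKernel P) (n : ℕ) (x : V) : hfun P A n x ≤ 1 :=
  (hfun_mem hP n x).2

lemma hfun_of_mem (n : ℕ) {x : V} (hx : x ∈ A) : hfun P A n x = 1 := by
  cases n <;> simp [hfun, hx]

lemma hfun_mono (hP : IsTransitionKernel P) (n : ℕ) (x : V) :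
    hfun P A n x ≤ hfun P A (n + 1) x := by
  induction n generalizing x with
  | zero =>
    by_cases hx : x ∈ A
    · simp [hfun, hx]
    · simpa [hfun, hx] using Pf_nonneg hP (fun y => hfun_nonneg hP 0 y) x
  | succ n ih =>
    by_cases hx : x ∈ A
    · simp [hfun, hx]
    · simp only [hfun, if_neg hx]
      exact Pf_mono hP (fun y => hfun_nonneg hP _ y) (fun y => hfun_nonneg hP _ y)
        (fun y => hfun_le_one hP _ y) (fun y => ih y) x

lemma hfun_le_Pf (hP : IsTransitionKernel P) (n : ℕ) {x : V} (hx : x ∉ A) :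
    hfun P A n x ≤ Pf P (hfun P A n) x := by
  cases n with
  | zero => simpa [hfun, hx] using Pf_nonneg hP (fun y => hfun_nonneg hP 0 y) x
  | succ n =>
    simp only [hfun, if_neg hx]
    exact Pf_mono hP (fun y => hfun_nonneg hP _ y) (fun y => hfun_nonneg hP _ y)
      (fun y => hfun_le_one hP _ y) (fun y => hfun_mono hP n y) x

end Stmt0Aux

namespace Stmt0Aux2
open Stmt0Aux

variable {V : Type*} {P : V → V → ℝ} {π : V → ℝ} {A : Set V} {lam : ℝ}

lemma Pf_sq_le (hP : IsTransitionKernel P) {f : V → ℝ}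
    (h0 : ∀ y, 0 ≤ f y) (h1 : ∀ y, f y ≤ 1) (x : V) :
    Pf P f x ^ 2 ≤ Pf P (fun y => f y ^ 2) x := by
  set T := Pf P (fun y => f y ^ 2) x with hT
  have hsq0 : ∀ y, 0 ≤ f y ^ 2 := fun y => sq_nonneg _
  have hsq1 : ∀ y, f y ^ 2 ≤ 1 := fun y => pow_le_one₀ (h0 y) (h1 y)
  have hT0 : 0 ≤ T := Pf_nonneg hP hsq0 x
  have hle : Pf P f x ≤ Real.sqrt T := by
    refine Summable.tsum_le_of_sum_le (summable_mul hP h0 h1 x) fun s => ?_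
    have hcs := Finset.sum_mul_sq_le_sq_mul_sq s (fun y => Real.sqrt (P x y))
      (fun y => Real.sqrt (P x y) * f y)
    have e1 : ∀ y, Real.sqrt (P x y) * (Real.sqrt (P x y) * f y) = P x y * f y := by
      intro y
      rw [← mul_assoc, Real.mul_self_sqrt (hP.1 x y)]
    have e2 : ∀ y, Real.sqrt (P x y) ^ 2 = P x y := fun y => Real.sq_sqrt (hP.1 x y)
    have e3 : ∀ y, (Real.sqrt (P x y) * f y) ^ 2 = P x y * f y ^ 2 := by
      intro y; rw [mul_pow, e2]
    rw [show (∑ y ∈ s, Real.sqrt (P x y) * (Real.sqrt (P x y) * f y))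
        = ∑ y ∈ s, P x y * f y from Finset.sum_congr rfl fun y _ => e1 y] at hcs
    rw [show (∑ y ∈ s, Real.sqrt (P x y) ^ 2) = ∑ y ∈ s, P x y from
        Finset.sum_congr rfl fun y _ => e2 y] at hcs
    rw [show (∑ y ∈ s, (Real.sqrt (P x y) * f y) ^ 2) = ∑ y ∈ s, P x y * f y ^ 2 from
        Finset.sum_congr rfl fun y _ => e3 y] at hcs
    have hs1 : ∑ y ∈ s, P x y ≤ 1 := by
      rw [← tsumP hP x]
      exact Summable.sum_le_tsum s (fun y _ => hP.1 x y) (sumP hP x)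
    have hs2 : ∑ y ∈ s, P x y * f y ^ 2 ≤ T := by
      rw [hT]
      exact Summable.sum_le_tsum s (fun y _ => mul_nonneg (hP.1 x y) (hsq0 y))
        (summable_mul hP hsq0 hsq1 x)
    have hsum0 : 0 ≤ ∑ y ∈ s, P x y * f y := by
      exact Finset.sum_nonneg fun y _ => mul_nonneg (hP.1 x y) (h0 y)
    have : (∑ y ∈ s, P x y * f y) ^ 2 ≤ T := by
      calc (∑ y ∈ s, P x y * f y) ^ 2 ≤ (∑ y ∈ s, P x y) * ∑ y ∈ s, P x y * f y ^ 2 := hcs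
        _ ≤ 1 * T := by
            refine mul_le_mul hs1 hs2 ?_ one_pos.le
            exact Finset.sum_nonneg fun y _ => mul_nonneg (hP.1 x y) (hsq0 y)
        _ = T := one_mul _
    exact (Real.le_sqrt hsum0 hT0).mpr this
  calc Pf P f x ^ 2 ≤ Real.sqrt T ^ 2 := by
        have h00 : 0 ≤ Pf P f x := Pf_nonneg hP h0 x
        exact pow_le_pow_left₀ h00 hle 2
    _ = T := Real.sq_sqrt hT0

lemma summable_Pf_of_pi (hrev : IsReversing P π) (hP : IsTransitionKernel P)
    {g : V → ℝ} (g0 : ∀ y, 0 ≤ g y)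
    (hsum : Summable fun y => π y * g y) (x : V) :
    Summable fun y => P x y * g y := by
  have hπx : 0 < π x := hrev.1 x
  refine Summable.of_nonneg_of_le (fun y => mul_nonneg (hP.1 x y) (g0 y))
    (fun y => ?_) (hsum.mul_left (1 / π x))
  have hbal : π x * P x y = π y * P y x := hrev.2 x y
  rw [one_div, ← mul_le_mul_iff_right₀ hπx]
  have e : π x * ((π x)⁻¹ * (π y * g y)) = π y * g y := by
    field_simp
  rw [e, ← mul_assoc, hbal]
  have h2 : π y * P y x ≤ π y := by
    have := mul_le_mul_of_nonneg_left (Ple1 hP y x) (hrev.1 y).le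
    simpa using this
  exact mul_le_mul_of_nonneg_right h2 (g0 y)

lemma stationary (hP : IsTransitionKernel P) (hrev : IsReversing P π)
    {g : V → ℝ} (g0 : ∀ y, 0 ≤ g y)
    (hsum : Summable fun y => π y * g y) :
    Summable (fun x => π x * Pf P g x) ∧
      ∑' x, π x * Pf P g x ≤ ∑' y, π y * g y := by
  have hinner : ∀ x, Summable fun y => P x y * g y := fun x =>
    summable_Pf_of_pi hrev hP g0 hsum x
  have hF : ∀ x, π x * Pf P g x = ∑' y, π y * P y x * g y := by
    intro x
    rw [Pf, ← tsum_mul_left]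
    refine tsum_congr fun y => ?_
    rw [← mul_assoc, hrev.2 x y]
  have hFy : ∀ x, Summable fun y => π y * P y x * g y := by
    intro x
    refine Summable.of_nonneg_of_le
      (fun y => mul_nonneg (mul_nonneg (hrev.1 y).le (hP.1 y x)) (g0 y))
      (fun y => ?_) hsum
    calc π y * P y x * g y ≤ π y * 1 * g y := by
          refine mul_le_mul_of_nonneg_right ?_ (g0 y)
          exact mul_le_mul_of_nonneg_left (Ple1 hP y x) (hrev.1 y).le
      _ = π y * g y := by ring
  have hbound : ∀ s : Finset V, ∑ x ∈ s, π x * Pf P g x ≤ ∑' y, π y * g y := by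
    intro s
    have e1 : ∑ x ∈ s, π x * Pf P g x = ∑' y, ∑ x ∈ s, π y * P y x * g y := by
      rw [Summable.tsum_finsetSum fun x _ => hFy x]
      exact Finset.sum_congr rfl fun x _ => hF x
    rw [e1]
    have e2 : ∀ y, ∑ x ∈ s, π y * P y x * g y = (π y * g y) * ∑ x ∈ s, P y x := by
      intro y
      rw [Finset.mul_sum]
      exact Finset.sum_congr rfl fun x _ => by ring
    rw [tsum_congr e2]
    have hb : ∀ y, (π y * g y) * ∑ x ∈ s, P y x ≤ π y * g y := by
      intro y
      have hle1 : ∑ x ∈ s, P y x ≤ 1 := by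
        rw [← tsumP hP y]
        exact Summable.sum_le_tsum s (fun x _ => hP.1 y x) (sumP hP y)
      have := mul_le_mul_of_nonneg_left hle1 (mul_nonneg (hrev.1 y).le (g0 y))
      simpa using this
    refine Summable.tsum_le_tsum (fun y => hb y) ?_ hsum
    refine Summable.of_nonneg_of_le (fun y => ?_) (fun y => hb y) hsum
    exact mul_nonneg (mul_nonneg (hrev.1 y).le (g0 y))
      (Finset.sum_nonneg fun x _ => hP.1 y x)
  have hnn : ∀ x, 0 ≤ π x * Pf P g x := fun x =>
    mul_nonneg (hrev.1 x).le (Pf_nonneg hP g0 x)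
  have hs : Summable fun x => π x * Pf P g x := summable_of_sum_le hnn hbound
  exact ⟨hs, Summable.tsum_le_of_sum_le hs hbound⟩

lemma sq_summable (hP : IsTransitionKernel P) (hrev : IsReversing P π)
    (hAfin : Summable fun x => if x ∈ A then π x else 0) :
    ∀ n, Summable fun x => π x * hfun P A n x ^ 2 := by
  intro n
  induction n with
  | zero =>
    refine hAfin.congr fun x => ?_
    by_cases hx : x ∈ A <;> simp [hfun, hx]
  | succ n ih =>
    have hst := stationary hP hrev (g := fun y => hfun P A n y ^ 2)
      (fun y => sq_nonneg _) ih
    refine Summable.of_nonneg_of_le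
      (fun x => mul_nonneg (hrev.1 x).le (sq_nonneg _)) (fun x => ?_)
      (hAfin.add hst.1)
    by_cases hx : x ∈ A
    · simp only [hfun, if_pos hx, one_pow, mul_one]
      have : 0 ≤ π x * Pf P (fun y => hfun P A n y ^ 2) x :=
        mul_nonneg (hrev.1 x).le
          (Pf_nonneg (f := fun y => hfun P A n y ^ 2) hP (fun y => sq_nonneg _) x)
      linarith
    · simp only [hfun, if_neg hx]
      have h1 : Pf P (hfun P A n) x ^ 2 ≤ Pf P (fun y => hfun P A n y ^ 2) x :=
        Pf_sq_le hP (fun y => hfun_nonneg hP n y) (fun y => hfun_le_one hP n y) x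
      have h2 : π x * Pf P (hfun P A n) x ^ 2 ≤
          π x * Pf P (fun y => hfun P A n y ^ 2) x :=
        mul_le_mul_of_nonneg_left h1 (hrev.1 x).le
      linarith

lemma key (hP : IsTransitionKernel P) (hrev : IsReversing P π)
    (hlam : 0 < lam) (hgap : SpectralGapLB P π lam)
    (hAfin : Summable fun x => if x ∈ A then π x else 0) (n : ℕ) :
    lam * (∑' x, if x ∈ A then π x else 0) ≤
      ∑' x, (if x ∈ A then π x * (1 - Pf P (hfun P A n) x) else 0) := by
  set h := hfun P A n with hh
  set u := Pf P (hfun P A n) with hu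
  have h0 : ∀ y, 0 ≤ h y := fun y => hfun_nonneg hP n y
  have h1 : ∀ y, h y ≤ 1 := fun y => hfun_le_one hP n y
  have u0 : ∀ x, 0 ≤ u x := fun x => Pf_nonneg hP h0 x
  have u1 : ∀ x, u x ≤ 1 := fun x => Pf_le_one hP h0 h1 x
  have hsq : Summable fun x => π x * h x ^ 2 := sq_summable hP hrev hAfin n
  -- Summability of π h u
  have hst := stationary hP hrev (g := fun y => h y ^ 2) (fun y => sq_nonneg _) hsq
  have hsumU2 : Summable fun x => π x * u x ^ 2 := by
    refine Summable.of_nonneg_of_le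
      (fun x => mul_nonneg (hrev.1 x).le (sq_nonneg _)) (fun x => ?_) hst.1
    exact mul_le_mul_of_nonneg_left (Pf_sq_le hP h0 h1 x) (hrev.1 x).le
  have hsumHU : Summable fun x => π x * h x * u x := by
    refine Summable.of_nonneg_of_le
      (fun x => mul_nonneg (mul_nonneg (hrev.1 x).le (h0 x)) (u0 x))
      (fun x => ?_) ((hsq.add hsumU2).div_const 2)
    have h2 := mul_le_mul_of_nonneg_left (two_mul_le_add_sq (h x) (u x)) (hrev.1 x).le
    nlinarith [h2]
  have hsumD : Summable fun x => π x * h x * (h x - u x) := by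
    have : (fun x => π x * h x * (h x - u x)) =
        fun x => π x * h x ^ 2 - π x * h x * u x := by
      funext x; ring
    rw [this]
    exact hsq.sub hsumHU
  have hsumE : Summable fun x => if x ∈ A then π x * (1 - u x) else 0 := by
    refine Summable.of_nonneg_of_le (fun x => ?_) (fun x => ?_) hAfin
    · by_cases hx : x ∈ A
      · simp only [if_pos hx]
        exact mul_nonneg (hrev.1 x).le (by linarith [u1 x])
      · simp [hx]
    · by_cases hx : x ∈ A
      · simp only [if_pos hx]
        calc π x * (1 - u x) ≤ π x * 1 :=
              mul_le_mul_of_nonneg_left (by linarith [u0 x]) (hrev.1 x).le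
          _ = π x := mul_one _
      · simp [hx]
  -- step 1 : lam * πA ≤ lam * ∑' π h²
  have s1 : (∑' x, if x ∈ A then π x else 0) ≤ ∑' x, π x * h x ^ 2 := by
    refine Summable.tsum_le_tsum (fun x => ?_) hAfin hsq
    by_cases hx : x ∈ A
    · simp only [if_pos hx, hh, hfun_of_mem n hx, one_pow, mul_one, le_refl]
    · simp only [if_neg hx]
      exact mul_nonneg (hrev.1 x).le (sq_nonneg _)
  -- step 2 : spectral gap
  have s2 : lam * ∑' x, π x * h x ^ 2 ≤ ∑' x, π x * h x * (h x - u x) := by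
    have := hgap h hsq
    simpa [hu, Pf] using this
  -- step 3 : termwise D ≤ E
  have s3 : (∑' x, π x * h x * (h x - u x)) ≤
      ∑' x, (if x ∈ A then π x * (1 - u x) else 0) := by
    refine Summable.tsum_le_tsum (fun x => ?_) hsumD hsumE
    by_cases hx : x ∈ A
    · simp only [if_pos hx, hh, hfun_of_mem n hx, mul_one, one_mul, le_refl]
    · simp only [if_neg hx]
      have hle : h x ≤ u x := hfun_le_Pf hP n hx
      have : π x * h x * (h x - u x) ≤ 0 :=
        mul_nonpos_of_nonneg_of_nonpos (mul_nonneg (hrev.1 x).le (h0 x))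
          (by linarith)
      exact this
  calc lam * (∑' x, if x ∈ A then π x else 0) ≤ lam * ∑' x, π x * h x ^ 2 :=
        mul_le_mul_of_nonneg_left s1 hlam.le
    _ ≤ ∑' x, π x * h x * (h x - u x) := s2
    _ ≤ _ := s3

noncomputable def rr (P : V → V → ℝ) (A : Set V) (x : V) : ℝ :=
  ⨆ n, Pf P (hfun P A n) x

lemma u_mono (hP : IsTransitionKernel P) (x : V) :
    Monotone fun n => Pf P (hfun P A n) x := by
  refine monotone_nat_of_le_succ fun n => ?_
  exact Pf_mono hP (fun y => hfun_nonneg hP n y) (fun y => hfun_nonneg hP (n+1) y)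
    (fun y => hfun_le_one hP (n+1) y) (fun y => hfun_mono hP n y) x

lemma u_bdd (hP : IsTransitionKernel P) (x : V) :
    BddAbove (Set.range fun n => Pf P (hfun P A n) x) := by
  refine ⟨1, fun r hr => ?_⟩
  obtain ⟨n, rfl⟩ := hr
  exact Pf_le_one hP (fun y => hfun_nonneg hP n y) (fun y => hfun_le_one hP n y) x

lemma u_le_rr (hP : IsTransitionKernel P) (n : ℕ) (x : V) :
    Pf P (hfun P A n) x ≤ rr P A x :=
  le_ciSup (u_bdd hP x) n

lemma rr_nonneg (hP : IsTransitionKernel P) (x : V) : 0 ≤ rr P A x :=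
  le_trans (Pf_nonneg hP (fun y => hfun_nonneg hP 0 y) x) (u_le_rr hP 0 x)

lemma rr_le_one (hP : IsTransitionKernel P) (x : V) : rr P A x ≤ 1 :=
  ciSup_le fun n => Pf_le_one hP (fun y => hfun_nonneg hP n y)
    (fun y => hfun_le_one hP n y) x

lemma u_tendsto (hP : IsTransitionKernel P) (x : V) :
    Filter.Tendsto (fun n => Pf P (hfun P A n) x) Filter.atTop (nhds (rr P A x)) :=
  tendsto_atTop_ciSup (u_mono hP x) (u_bdd hP x)

lemma key_limit (hP : IsTransitionKernel P) (hrev : IsReversing P π)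
    (hlam : 0 < lam) (hgap : SpectralGapLB P π lam)
    (hAfin : Summable fun x => if x ∈ A then π x else 0) :
    lam * (∑' x, if x ∈ A then π x else 0) ≤
      ∑' x, (if x ∈ A then π x * (1 - rr P A x) else 0) := by
  have htend : Filter.Tendsto
      (fun n => ∑' x, (if x ∈ A then π x * (1 - Pf P (hfun P A n) x) else 0))
      Filter.atTop
      (nhds (∑' x, (if x ∈ A then π x * (1 - rr P A x) else 0))) := by
    refine tendsto_tsum_of_dominated_convergence hAfin (fun x => ?_) ?_
    · by_cases hx : x ∈ A
      · simp only [if_pos hx]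
        exact (tendsto_const_nhds.sub (u_tendsto hP x)).const_mul (π x)
      · simp only [if_neg hx]
        exact tendsto_const_nhds
    · refine Filter.Eventually.of_forall fun n x => ?_
      by_cases hx : x ∈ A
      · simp only [if_pos hx]
        have u0 := Pf_nonneg (f := hfun P A n) hP (fun y => hfun_nonneg hP n y) x
        have u1 := Pf_le_one (f := hfun P A n) hP (fun y => hfun_nonneg hP n y)
          (fun y => hfun_le_one hP n y) x
        rw [Real.norm_eq_abs, abs_of_nonneg
          (mul_nonneg (hrev.1 x).le (by linarith))]
        calc π x * (1 - Pf P (hfun P A n) x) ≤ π x * 1 :=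
              mul_le_mul_of_nonneg_left (by linarith) (hrev.1 x).le
          _ = π x := mul_one _
      · simp [hx]
  exact ge_of_tendsto htend (Filter.Eventually.of_forall fun n =>
    key hP hrev hlam hgap hAfin n)

end Stmt0Aux2

namespace Stmt0Aux3
open Stmt0Aux Stmt0Aux2

variable {V : Type*}

noncomputable def W (P : V → V → ℝ) : V → List V → ℝ≥0∞
  | _, [] => 1
  | x, y :: l => ENNReal.ofReal (P x y) * W P y l

def Gd (A : Set V) (v₀ : V) (l : List V) : Prop :=
  l ≠ [] ∧ (∀ i, i + 1 < l.length → l.getD i v₀ ∉ A) ∧ l.getD (l.length - 1) v₀ ∈ A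

variable {P : V → V → ℝ} {π : V → ℝ} {A : Set V} {v₀ : V}

lemma Gd_nil : ¬ Gd A v₀ [] := fun h => h.1 rfl

lemma Gd_singleton (y : V) : Gd A v₀ [y] ↔ y ∈ A := by
  constructor
  · intro h
    simpa using h.2.2
  · intro hy
    refine ⟨by simp, fun i hi => absurd hi (by simp), by simpa⟩

lemma Gd_cons (y : V) (l : List V) (hl : l ≠ []) :
    Gd A v₀ (y :: l) ↔ (y ∉ A ∧ Gd A v₀ l) := by
  obtain ⟨m, hm⟩ : ∃ m, l.length = m + 1 :=
    ⟨l.length - 1, (Nat.succ_pred_eq_of_pos (List.length_pos_iff.2 hl)).symm⟩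
  constructor
  · intro h
    refine ⟨?_, hl, fun i hi => ?_, ?_⟩
    · have := h.2.1 0 (by simp [hm])
      simpa using this
    · have := h.2.1 (i + 1) (by simp [hm] at hi ⊢; omega)
      simpa [List.getD_cons_succ] using this
    · have := h.2.2
      rw [List.length_cons, hm] at this
      simpa [List.getD_cons_succ, hm] using this
  · rintro ⟨hy, -, hint, hlast⟩
    refine ⟨List.cons_ne_nil _ _, fun i hi => ?_, ?_⟩
    · cases i with
      | zero => simpa using hy
      | succ j =>
        rw [List.getD_cons_succ]
        exact hint j (by simpa using hi)
    · rw [List.length_cons, hm]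
      simpa [List.getD_cons_succ, hm] using hlast

def consEquiv (V : Type*) : V × List V ≃ {l : List V // l ≠ []} where
  toFun := fun p => ⟨p.1 :: p.2, List.cons_ne_nil _ _⟩
  invFun := fun l => (l.1.head l.2, l.1.tail)
  left_inv := fun p => by simp
  right_inv := fun l => Subtype.ext (List.cons_head_tail l.2)

lemma tsum_list (f : List V → ℝ≥0∞) (h0 : f [] = 0) :
    ∑' l, f l = ∑' y : V, ∑' l : List V, f (y :: l) := by
  have e := consEquiv V
  have h1 : ∑' l : {l : List V // l ≠ []}, f l.1 = ∑' l, f l :=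
    tsum_subtype_eq_of_support_subset (fun l hl => by
      rintro rfl
      exact hl h0)
  rw [← h1, ← (consEquiv V).tsum_eq (fun l : {l : List V // l ≠ []} => f l.1)]
  exact ENNReal.tsum_prod'

lemma W_prod (P : V → V → ℝ) (v₀ : V) :
    ∀ (l : List V) (x : V),
      (∏ i ∈ Finset.range l.length,
        ENNReal.ofReal (P ((x :: l).getD i v₀) ((x :: l).getD (i + 1) v₀))) = W P x l := by
  intro l
  induction l with
  | nil => intro x; simp [W]
  | cons y l ih =>
    intro x
    rw [List.length_cons, Finset.prod_range_succ']
    have e1 : ∀ i, (x :: y :: l).getD (i + 1) v₀ = (y :: l).getD i v₀ := fun i =>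
      List.getD_cons_succ
    simp only [e1, List.getD_cons_zero]
    rw [ih y, W, mul_comm]

lemma T_eq (hP : IsTransitionKernel P) (v₀ : V) :
    ∀ (n : ℕ) (x : V),
      (∑' l : List V, if Gd A v₀ l ∧ l.length ≤ n + 1 then W P x l else 0)
        = ENNReal.ofReal (Pf P (hfun P A n) x) := by
  have hnil : ∀ (x : V) (n : ℕ),
      (if Gd A v₀ ([] : List V) ∧ ([] : List V).length ≤ n + 1
        then W P x ([] : List V) else 0) = 0 := by
    intro x n
    rw [if_neg]
    rintro ⟨hG, -⟩
    exact Gd_nil hG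
  have hofReal : ∀ (n : ℕ) (x : V),
      ENNReal.ofReal (Pf P (hfun P A n) x)
        = ∑' y, ENNReal.ofReal (P x y * hfun P A n y) := by
    intro n x
    exact ENNReal.ofReal_tsum_of_nonneg
      (fun y => mul_nonneg (hP.1 x y) (hfun_nonneg hP n y))
      (summable_mul hP (fun y => hfun_nonneg hP n y) (fun y => hfun_le_one hP n y) x)
  intro n
  induction n with
  | zero =>
    intro x
    rw [tsum_list _ (hnil x 0)]
    have hinner : ∀ y : V,
        (∑' l : List V, if Gd A v₀ (y :: l) ∧ (y :: l).length ≤ 1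
          then W P x (y :: l) else 0)
          = if y ∈ A then ENNReal.ofReal (P x y) else 0 := by
      intro y
      have : ∀ l : List V,
          (if Gd A v₀ (y :: l) ∧ (y :: l).length ≤ 1 then W P x (y :: l) else 0)
            = if l = [] then (if y ∈ A then ENNReal.ofReal (P x y) else 0) else 0 := by
        intro l
        by_cases hl : l = []
        · subst hl
          by_cases hy : y ∈ A
          · rw [if_pos ⟨(Gd_singleton y).2 hy, by simp⟩, if_pos rfl, if_pos hy]
            simp [W]
          · rw [if_neg, if_pos rfl, if_neg hy]
            rintro ⟨hG, -⟩
            exact hy ((Gd_singleton y).1 hG)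
        · rw [if_neg, if_neg hl]
          rintro ⟨-, hlen⟩
          have : l.length ≥ 1 := List.length_pos_iff.2 hl
          simp only [List.length_cons] at hlen
          omega
      rw [tsum_congr this, tsum_ite_eq]
    rw [tsum_congr hinner, hofReal 0 x]
    refine tsum_congr fun y => ?_
    by_cases hy : y ∈ A
    · simp [hfun, hy]
    · simp [hfun, hy]
  | succ n ih =>
    intro x
    rw [tsum_list _ (hnil x (n + 1))]
    have hinner : ∀ y : V,
        (∑' l : List V, if Gd A v₀ (y :: l) ∧ (y :: l).length ≤ n + 2
          then W P x (y :: l) else 0)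
          = if y ∈ A then ENNReal.ofReal (P x y)
            else ENNReal.ofReal (P x y) * ENNReal.ofReal (Pf P (hfun P A n) y) := by
      intro y
      by_cases hy : y ∈ A
      · rw [if_pos hy]
        have : ∀ l : List V,
            (if Gd A v₀ (y :: l) ∧ (y :: l).length ≤ n + 2 then W P x (y :: l) else 0)
              = if l = [] then ENNReal.ofReal (P x y) else 0 := by
          intro l
          by_cases hl : l = []
          · subst hl
            rw [if_pos ⟨(Gd_singleton y).2 hy, by simp⟩, if_pos rfl]
            simp [W]
          · rw [if_neg, if_neg hl]
            rintro ⟨hG, -⟩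
            exact ((Gd_cons y l hl).1 hG).1 hy
        rw [tsum_congr this, tsum_ite_eq]
      · rw [if_neg hy]
        have : ∀ l : List V,
            (if Gd A v₀ (y :: l) ∧ (y :: l).length ≤ n + 2 then W P x (y :: l) else 0)
              = ENNReal.ofReal (P x y) *
                (if Gd A v₀ l ∧ l.length ≤ n + 1 then W P y l else 0) := by
          intro l
          by_cases hl : l = []
          · subst hl
            rw [if_neg, if_neg]
            · simp
            · rintro ⟨hG, -⟩
              exact Gd_nil hG
            · rintro ⟨hG, -⟩
              exact hy ((Gd_singleton y).1 hG)
          · have hGiff : Gd A v₀ (y :: l) ∧ (y :: l).length ≤ n + 2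
                ↔ Gd A v₀ l ∧ l.length ≤ n + 1 := by
              rw [Gd_cons y l hl, List.length_cons]
              constructor
              · rintro ⟨⟨-, hG⟩, hlen⟩
                exact ⟨hG, by omega⟩
              · rintro ⟨hG, hlen⟩
                exact ⟨⟨hy, hG⟩, by omega⟩
            by_cases hc : Gd A v₀ l ∧ l.length ≤ n + 1
            · rw [if_pos (hGiff.2 hc), if_pos hc]
              rfl
            · rw [if_neg (fun h => hc (hGiff.1 h)), if_neg hc, mul_zero]
        rw [tsum_congr this, ENNReal.tsum_mul_left, ih y]
    rw [tsum_congr hinner, hofReal (n + 1) x]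
    refine tsum_congr fun y => ?_
    by_cases hy : y ∈ A
    · simp [hfun, hy]
    · rw [if_neg hy]
      rw [← ENNReal.ofReal_mul (hP.1 x y)]
      simp [hfun, hy]

lemma S_le (hP : IsTransitionKernel P) (v₀ : V) (x : V) :
    (∑' l : List V, if Gd A v₀ l then W P x l else 0)
      ≤ ENNReal.ofReal (rr P A x) := by
  rw [ENNReal.tsum_eq_iSup_sum]
  refine iSup_le fun s => ?_
  set n := s.sup List.length with hn
  calc ∑ l ∈ s, (if Gd A v₀ l then W P x l else 0)
      ≤ ∑ l ∈ s, (if Gd A v₀ l ∧ l.length ≤ n + 1 then W P x l else 0) := by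
        refine Finset.sum_le_sum fun l hl => ?_
        by_cases hG : Gd A v₀ l
        · have hle : l.length ≤ n := Finset.le_sup hl
          rw [if_pos hG, if_pos ⟨hG, by omega⟩]
        · simp [hG]
    _ ≤ ∑' l : List V, (if Gd A v₀ l ∧ l.length ≤ n + 1 then W P x l else 0) :=
        ENNReal.sum_le_tsum s
    _ = ENNReal.ofReal (Pf P (hfun P A n) x) := T_eq hP v₀ n x
    _ ≤ ENNReal.ofReal (rr P A x) := ENNReal.ofReal_le_ofReal (u_le_rr hP n x)

end Stmt0Aux3

open Stmt0Aux Stmt0Aux2 Stmt0Aux3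

open scoped Classical in
/-- for a reversible irreducible Markov chain on a countable state space `V` with
stationary measure `π` of infinite total mass, whose spectral gap in `ℓ²(π)` is at least
`lam > 0`, and any nonempty `A ⊆ V` with `π(A) < ∞`, the chain started from the normalized
restriction `π_A` of `π` to `A` never returns to `A` after time `0` with probability
at least `lam`. -/
theorem stmt_0 {V : Type*} [Countable V] [MeasurableSpace V]
    (P : V → V → ℝ) (π : V → ℝ) (μ : V → Measure (ℕ → V)) (lam : ℝ)
    (hP : IsTransitionKernel P) (hirr : KernelIrreducible P) (hrev : IsReversing P π)
    (hinf : ¬ Summable π) (hμ : IsMarkovPathLaw P μ)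
    (hlam : 0 < lam) (hgap : SpectralGapLB P π lam)
    (A : Set V) (hA : A.Nonempty)
    (hAfin : Summable (fun x => if x ∈ A then π x else 0)) :
    ENNReal.ofReal lam ≤
      (∑' x : V, (if x ∈ A then ENNReal.ofReal (π x) else 0) *
          μ x {ω | ∀ t, 0 < t → ω t ∉ A}) /
        ENNReal.ofReal (∑' x : V, if x ∈ A then π x else 0) := by
  classical
  obtain ⟨v₀, hv₀⟩ := hA
  -- main pointwise lower bound on the never-return probability
  have hnever : ∀ x : V,
      ENNReal.ofReal (1 - rr P A x) ≤ μ x {ω | ∀ t, 0 < t → ω t ∉ A} := by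
    intro x
    have hcyl : ∀ l : List V,
        μ x {ω : ℕ → V | ∀ i ≤ l.length, ω i = (x :: l).getD i v₀} = W P x l := by
      intro l
      have h2 := hμ.2 x l.length (fun i => (x :: l).getD i v₀)
      rw [List.getD_cons_zero, if_pos rfl, one_mul] at h2
      rw [← W_prod P v₀ l x]
      exact h2
    have hzero : μ x {ω : ℕ → V | ω 0 ≠ x} = 0 := by
      have hsub : {ω : ℕ → V | ω 0 ≠ x} ⊆
          ⋃ y : V, (if y = x then (∅ : Set (ℕ → V)) else {ω | ∀ i ≤ 0, ω i = y}) := by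
        intro ω hω
        refine Set.mem_iUnion.2 ⟨ω 0, ?_⟩
        rw [if_neg hω]
        intro i hi
        rw [Nat.le_zero.1 hi]
      have hle : μ x {ω : ℕ → V | ω 0 ≠ x} ≤
          ∑' y : V, μ x (if y = x then (∅ : Set (ℕ → V)) else {ω | ∀ i ≤ 0, ω i = y}) :=
        (measure_mono hsub).trans (measure_iUnion_le _)
      have hterm : ∀ y : V,
          μ x (if y = x then (∅ : Set (ℕ → V)) else {ω | ∀ i ≤ 0, ω i = y}) = 0 := by
        intro y
        by_cases hy : y = x
        · simp [hy]
        · rw [if_neg hy]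
          have h2 := hμ.2 x 0 (fun _ => y)
          simpa [hy] using h2
      rw [tsum_congr hterm, tsum_zero] at hle
      exact le_antisymm hle zero_le
    set C : List V → Set (ℕ → V) := fun l =>
      if Gd A v₀ l
        then {ω : ℕ → V | ∀ i ≤ l.length, ω i = (x :: l).getD i v₀}
        else (∅ : Set (ℕ → V)) with hC
    have hcover : {ω : ℕ → V | ¬ ∀ t, 0 < t → ω t ∉ A} ⊆
        {ω : ℕ → V | ω 0 ≠ x} ∪ ⋃ l : List V, C l := by
      intro ω hω
      by_cases h0 : ω 0 = x
      · simp only [Set.mem_setOf_eq] at hω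
        push_neg at hω
        obtain ⟨t, ht, htA⟩ := hω
        have hex : ∃ t, 0 < t ∧ ω t ∈ A := ⟨t, ht, htA⟩
        right
        set t0 := Nat.find hex with ht0
        obtain ⟨ht0pos, ht0A⟩ := Nat.find_spec hex
        set l := List.ofFn (fun i : Fin t0 => ω (i + 1)) with hl
        have hlen : l.length = t0 := by simp [hl]
        have hget : ∀ i, i < t0 → l.getD i v₀ = ω (i + 1) := by
          intro i hi
          have hi' : i < l.length := by omega
          rw [List.getD_eq_getElem l v₀ hi']
          simp [hl]
        have hG : Gd A v₀ l := by
          refine ⟨?_, ?_, ?_⟩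
          · intro h
            rw [h] at hlen
            simp at hlen
            omega
          · intro i hi
            rw [hlen] at hi
            rw [hget i (by omega)]
            have hm := Nat.find_min hex (m := i + 1) (by omega)
            push_neg at hm
            exact hm (by omega)
          · rw [hlen, hget (t0 - 1) (by omega)]
            have he : t0 - 1 + 1 = t0 := by omega
            rw [he]
            exact ht0A
        refine Set.mem_iUnion.2 ⟨l, ?_⟩
        rw [hC]
        simp only [if_pos hG]
        intro i hi
        rw [hlen] at hi
        cases i with
        | zero => simpa using h0
        | succ j =>
          rw [List.getD_cons_succ]
          exact (hget j (by omega)).symm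
      · left
        exact h0
    have hWle : ∀ l : List V, μ x (C l) ≤ (if Gd A v₀ l then W P x l else 0) := by
      intro l
      rw [hC]
      by_cases hG : Gd A v₀ l
      · simp only [if_pos hG]
        exact (hcyl l).le
      · simp [hG]
    have hev : μ x {ω : ℕ → V | ¬ ∀ t, 0 < t → ω t ∉ A} ≤ ENNReal.ofReal (rr P A x) := by
      calc μ x {ω : ℕ → V | ¬ ∀ t, 0 < t → ω t ∉ A}
          ≤ μ x ({ω : ℕ → V | ω 0 ≠ x} ∪ ⋃ l : List V, C l) := measure_mono hcover
        _ ≤ μ x {ω : ℕ → V | ω 0 ≠ x} + μ x (⋃ l : List V, C l) := measure_union_le _ _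
        _ ≤ 0 + ∑' l : List V, μ x (C l) := add_le_add hzero.le (measure_iUnion_le _)
        _ = ∑' l : List V, μ x (C l) := zero_add _
        _ ≤ ∑' l : List V, (if Gd A v₀ l then W P x l else 0) := ENNReal.tsum_le_tsum hWle
        _ ≤ ENNReal.ofReal (rr P A x) := S_le hP v₀ x
    have huniv : μ x Set.univ = 1 := (hμ.1 x).measure_univ
    have hsplit : (Set.univ : Set (ℕ → V)) ⊆
        {ω : ℕ → V | ∀ t, 0 < t → ω t ∉ A} ∪ {ω : ℕ → V | ¬ ∀ t, 0 < t → ω t ∉ A} := by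
      intro ω _
      by_cases h : ∀ t, 0 < t → ω t ∉ A
      · exact Or.inl h
      · exact Or.inr h
    have h1le : (1 : ℝ≥0∞) ≤ μ x {ω | ∀ t, 0 < t → ω t ∉ A} + ENNReal.ofReal (rr P A x) := by
      calc (1 : ℝ≥0∞) = μ x Set.univ := huniv.symm
        _ ≤ μ x ({ω : ℕ → V | ∀ t, 0 < t → ω t ∉ A} ∪
              {ω : ℕ → V | ¬ ∀ t, 0 < t → ω t ∉ A}) := measure_mono hsplit
        _ ≤ μ x {ω : ℕ → V | ∀ t, 0 < t → ω t ∉ A} +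
              μ x {ω : ℕ → V | ¬ ∀ t, 0 < t → ω t ∉ A} := measure_union_le _ _
        _ ≤ _ := add_le_add le_rfl hev
    rw [ENNReal.ofReal_sub _ (rr_nonneg hP x), ENNReal.ofReal_one]
    exact tsub_le_iff_right.2 h1le
  -- summability of the limit integrand
  have hEsum : Summable (fun x => if x ∈ A then π x * (1 - rr P A x) else 0) := by
    refine Summable.of_nonneg_of_le (fun x => ?_) (fun x => ?_) hAfin
    · by_cases hx : x ∈ A
      · rw [if_pos hx]
        have := rr_le_one (A := A) hP x
        exact mul_nonneg (hrev.1 x).le (by linarith)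
      · simp [hx]
    · by_cases hx : x ∈ A
      · simp only [if_pos hx]
        have h1 := rr_nonneg (A := A) hP x
        have h2 := (hrev.1 x).le
        nlinarith
      · simp [hx]
  have hkey := key_limit hP hrev hlam hgap hAfin
  have hπApos : 0 < ∑' x, if x ∈ A then π x else 0 := by
    have hterm : π v₀ ≤ ∑' x, if x ∈ A then π x else 0 := by
      have := Summable.le_tsum hAfin v₀ (fun b _ => by
        by_cases hb : b ∈ A
        · rw [if_pos hb]
          exact (hrev.1 b).le
        · simp [hb])
      rwa [if_pos hv₀] at this
    exact lt_of_lt_of_le (hrev.1 v₀) hterm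
  rw [ENNReal.le_div_iff_mul_le (Or.inl (ENNReal.ofReal_pos.2 hπApos).ne')
    (Or.inl ENNReal.ofReal_ne_top)]
  rw [← ENNReal.ofReal_mul hlam.le]
  calc ENNReal.ofReal (lam * ∑' x, if x ∈ A then π x else 0)
      ≤ ENNReal.ofReal (∑' x, if x ∈ A then π x * (1 - rr P A x) else 0) :=
        ENNReal.ofReal_le_ofReal hkey
    _ = ∑' x, ENNReal.ofReal (if x ∈ A then π x * (1 - rr P A x) else 0) := by
        refine ENNReal.ofReal_tsum_of_nonneg (fun x => ?_) hEsum
        by_cases hx : x ∈ A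
        · rw [if_pos hx]
          have := rr_le_one (A := A) hP x
          exact mul_nonneg (hrev.1 x).le (by linarith)
        · simp [hx]
    _ ≤ ∑' x : V, (if x ∈ A then ENNReal.ofReal (π x) else 0) *
          μ x {ω | ∀ t, 0 < t → ω t ∉ A} := by
        refine ENNReal.tsum_le_tsum fun x => ?_
        by_cases hx : x ∈ A
        · rw [if_pos hx, if_pos hx, ENNReal.ofReal_mul (hrev.1 x).le]
          exact mul_le_mul_right (hnever x) _
        · simp [hx]
end

section
/- Under the hypotheses of the escape-probability lemma, for any nonempty A ⊆ V with π(A) < ∞ and any set B ⊆ V disjoint from A such that V∖(A∪B) is finite, if τ⁺ = min{t > 0 : X_t ∈ A∪B}, then P_{π_A}(X_{τ⁺} ∈ B) ≥ λ₁. -/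
namespace Stmt1Aux

open MeasureTheory Filter Topology
open scoped ENNReal
variable {V : Type*} (P : V → V → ℝ) (S : Finset V)

/-- restriction of `P` to the finite set `S`, acting on functions -/
def Qop (u : V → ℝ) : V → ℝ := fun y => ∑ z ∈ S, P y z * u z

variable {P S}

lemma Qop_nonneg (h0 : ∀ x y, 0 ≤ P x y) {u : V → ℝ} (hu : ∀ z, 0 ≤ u z) (y : V) :
    0 ≤ Qop P S u y :=
  Finset.sum_nonneg fun z _ => mul_nonneg (h0 y z) (hu z)

lemma Qop_mono_on (h0 : ∀ x y, 0 ≤ P x y) {u v : V → ℝ} (huv : ∀ z ∈ S, u z ≤ v z) (y : V) :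
    Qop P S u y ≤ Qop P S v y :=
  Finset.sum_le_sum fun z hz => mul_le_mul_of_nonneg_left (huv z hz) (h0 y z)

lemma Qop_mono (h0 : ∀ x y, 0 ≤ P x y) {u v : V → ℝ} (huv : ∀ z, u z ≤ v z) (y : V) :
    Qop P S u y ≤ Qop P S v y := Qop_mono_on h0 (fun z _ => huv z) y

lemma Qop_add (u v : V → ℝ) : Qop P S (fun z => u z + v z) = fun y => Qop P S u y + Qop P S v y := by
  funext y
  simp only [Qop, mul_add, Finset.sum_add_distrib]

lemma Qop_smul (c : ℝ) (u : V → ℝ) : Qop P S (fun z => c * u z) = fun y => c * Qop P S u y := by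
  funext y
  simp only [Qop, Finset.mul_sum]
  congr 1; funext z; ring

lemma iter_nonneg (h0 : ∀ x y, 0 ≤ P x y) {u : V → ℝ} (hu : ∀ z, 0 ≤ u z) (n : ℕ) (y : V) :
    0 ≤ (Qop P S)^[n] u y := by
  induction n generalizing u y with
  | zero => exact hu y
  | succ n ih =>
    rw [Function.iterate_succ_apply]
    exact ih (fun z => Qop_nonneg h0 hu z) y

lemma iter_mono (h0 : ∀ x y, 0 ≤ P x y) {u v : V → ℝ} (huv : ∀ z, u z ≤ v z) (n : ℕ) (y : V) :
    (Qop P S)^[n] u y ≤ (Qop P S)^[n] v y := by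
  induction n generalizing u v y with
  | zero => exact huv y
  | succ n ih =>
    rw [Function.iterate_succ_apply, Function.iterate_succ_apply]
    exact ih (fun z => Qop_mono h0 huv z) y

lemma iter_mono_on (h0 : ∀ x y, 0 ≤ P x y) {u v : V → ℝ} (huv : ∀ z ∈ S, u z ≤ v z)
    (n : ℕ) (y : V) : (Qop P S)^[n + 1] u y ≤ (Qop P S)^[n + 1] v y := by
  induction n generalizing y with
  | zero => exact Qop_mono_on h0 huv y
  | succ n ih =>
    rw [Function.iterate_succ_apply', Function.iterate_succ_apply' (n := n + 1)]
    exact Qop_mono_on h0 (fun z _ => ih z) y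

lemma iter_add (u v : V → ℝ) (n : ℕ) :
    (Qop P S)^[n] (fun z => u z + v z) = fun y => (Qop P S)^[n] u y + (Qop P S)^[n] v y := by
  induction n generalizing u v with
  | zero => rfl
  | succ n ih =>
    rw [Function.iterate_succ_apply, Function.iterate_succ_apply, Function.iterate_succ_apply,
      Qop_add]
    exact ih _ _

lemma iter_smul (c : ℝ) (u : V → ℝ) (n : ℕ) :
    (Qop P S)^[n] (fun z => c * u z) = fun y => c * (Qop P S)^[n] u y := by
  induction n generalizing u with
  | zero => rfl
  | succ n ih =>
    rw [Function.iterate_succ_apply, Function.iterate_succ_apply, Qop_smul]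
    exact ih _

lemma iter_sub (u v : V → ℝ) (n : ℕ) :
    (Qop P S)^[n] (fun z => u z - v z) = fun y => (Qop P S)^[n] u y - (Qop P S)^[n] v y := by
  have h : (fun z => u z - v z) = fun z => u z + (-1 : ℝ) * v z := by funext z; ring
  rw [h, iter_add u (fun z => (-1:ℝ) * v z), iter_smul]
  funext y; ring

/-- lower bound for the iterate along a path staying in `S` -/
lemma iter_path_lb (h0 : ∀ x y, 0 ≤ P x y) {u : V → ℝ} (hu : ∀ z, 0 ≤ u z)
    (k : ℕ) (w : ℕ → V) (hw : ∀ i ≤ k, w i ∈ S) :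
    (∏ i ∈ Finset.range k, P (w i) (w (i + 1))) * u (w k) ≤ (Qop P S)^[k] u (w 0) := by
  induction k generalizing w with
  | zero => simp
  | succ k ih =>
    rw [Function.iterate_succ_apply']
    have step : P (w 0) (w 1) * (Qop P S)^[k] u (w 1) ≤ Qop P S ((Qop P S)^[k] u) (w 0) := by
      have : ∀ z ∈ S, 0 ≤ P (w 0) z * (Qop P S)^[k] u z :=
        fun z _ => mul_nonneg (h0 _ z) (iter_nonneg h0 hu k z)
      exact Finset.single_le_sum this (hw 1 (by omega))
    refine le_trans ?_ step
    have ihs := ih (fun i => w (i + 1)) (fun i hi => hw (i + 1) (by omega))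
    calc (∏ i ∈ Finset.range (k+1), P (w i) (w (i + 1))) * u (w (k+1))
        = P (w 0) (w 1) * ((∏ i ∈ Finset.range k, P (w (i+1)) (w (i + 2))) * u (w (k+1))) := by
          rw [Finset.prod_range_succ']; ring
      _ ≤ P (w 0) (w 1) * (Qop P S)^[k] u (w 1) :=
          mul_le_mul_of_nonneg_left ihs (h0 _ _)


/-- weight of a finite path starting (implicitly) at `x` -/
def wtp (P : V → V → ℝ) : V → List V → ℝ
  | _, [] => 1
  | x, y :: l => P x y * wtp P y l

/-- path through `S` ending in `A` -/
def GoodA (S : Finset V) (A : Set V) : List V → Prop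
  | [] => False
  | [a] => a ∈ A
  | y :: z :: l => y ∈ S ∧ GoodA S A (z :: l)

/-- path of length `n` staying in `S` -/
def GoodC (S : Finset V) (n : ℕ) (l : List V) : Prop := l.length = n ∧ ∀ y ∈ l, (y ∈ S)

lemma wtp_nonneg (h0 : ∀ x y, 0 ≤ P x y) : ∀ (x : V) (l : List V), 0 ≤ wtp P x l
  | _, [] => zero_le_one
  | x, y :: l => mul_nonneg (h0 x y) (wtp_nonneg h0 y l)

lemma wtp_eq_prod (x d : V) (l : List V) :
    wtp P x l = ∏ i ∈ Finset.range l.length, P ((x :: l).getD i d) ((x :: l).getD (i+1) d) := by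
  induction l generalizing x with
  | nil => simp [wtp]
  | cons y l ih =>
    rw [wtp, ih y]
    rw [List.length_cons, Finset.prod_range_succ']
    simp only [List.getD_cons_succ, List.getD_cons_zero]
    ring

lemma goodA_cons {A : Set V} {y : V} {l : List V} (hl : l ≠ []) (h : GoodA S A (y :: l)) :
    y ∈ S ∧ GoodA S A l := by
  cases l with
  | nil => exact absurd rfl hl
  | cons z t => exact h

lemma goodA_singleton {A : Set V} {a : V} : GoodA S A [a] ↔ a ∈ A := Iff.rfl

lemma goodA_ne_nil {A : Set V} {l : List V} (h : GoodA S A l) : l ≠ [] := by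
  cases l with
  | nil => exact absurd h not_false
  | cons z t => simp

lemma goodA_mk {A : Set V} (m : ℕ) (w : ℕ → V) (hw : ∀ i < m, w i ∈ S) (hm : w m ∈ A) :
    GoodA S A ((List.range (m+1)).map w) := by
  induction m generalizing w with
  | zero => simpa [GoodA] using hm
  | succ m ih =>
    have : List.range (m + 1 + 1) = 0 :: (List.range (m+1)).map Nat.succ :=
      List.range_succ_eq_map
    rw [this]
    simp only [List.map_cons, List.map_map]
    have h2 : (List.range (m+1)).map (w ∘ Nat.succ) ≠ [] := by simp
    have h3 : GoodA S A ((List.range (m+1)).map (w ∘ Nat.succ)) :=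
      ih (w ∘ Nat.succ) (fun i hi => hw (i+1) (by omega)) hm
    cases hc : (List.range (m+1)).map (w ∘ Nat.succ) with
    | nil => exact absurd hc h2
    | cons z t =>
      rw [hc] at h3
      exact ⟨hw 0 (by omega), h3⟩

lemma goodC_mk (n : ℕ) (w : ℕ → V) (hw : ∀ i < n, w i ∈ S) :
    GoodC S n ((List.range n).map w) := by
  constructor
  · simp
  · intro y hy
    obtain ⟨i, hi, rfl⟩ := by simpa using hy
    exact hw i hi

lemma getD_map_range (m j : ℕ) (f : ℕ → V) (d : V) (hj : j < m) :
    ((List.range m).map f).getD j d = f j := by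
  rw [List.getD_eq_getElem?_getD]
  simp [List.getElem?_map, List.getElem?_range hj]


variable (P S) in
/-- horizon-`n` bound function: paths that have entered `A` plus paths still in `S` -/
def Phi (rA : V → ℝ) (n : ℕ) (x : V) : ℝ :=
  ∑ i ∈ Finset.range n, (Qop P S)^[i] rA x + (Qop P S)^[n] (fun _ => 1) x

lemma Phi_nonneg (h0 : ∀ x y, 0 ≤ P x y) {rA : V → ℝ} (hrAnn : ∀ y, 0 ≤ rA y) (n : ℕ) (x : V) :
    0 ≤ Phi P S rA n x :=
  add_nonneg (Finset.sum_nonneg fun i _ => iter_nonneg h0 hrAnn i x)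
    (iter_nonneg h0 (fun _ => zero_le_one) n x)

lemma Phi_succ (rA : V → ℝ) (n : ℕ) (x : V) :
    Phi P S rA (n+1) x = rA x + Qop P S (Phi P S rA n) x := by
  have hq : Qop P S (Phi P S rA n) x =
      Qop P S (fun z => ∑ i ∈ Finset.range n, (Qop P S)^[i] rA z) x
        + Qop P S ((Qop P S)^[n] (fun _ => 1)) x := by
    simp only [Qop, Phi, mul_add, Finset.sum_add_distrib]
  have hswap : Qop P S (fun z => ∑ i ∈ Finset.range n, (Qop P S)^[i] rA z) x
      = ∑ i ∈ Finset.range n, Qop P S ((Qop P S)^[i] rA) x := by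
    simp only [Qop, Finset.mul_sum]
    exact Finset.sum_comm
  rw [Phi, Finset.sum_range_succ', hq, hswap]
  simp only [Function.iterate_succ_apply', Function.iterate_zero_apply]
  ring

lemma pathsum_le (h0 : ∀ x y, 0 ≤ P x y) (A : Set V) (rA : V → ℝ)
    (hrAnn : ∀ y, 0 ≤ rA y)
    (hsum : ∀ (y : V) (T : Finset V), (∀ a ∈ T, a ∈ A) → ∑ a ∈ T, P y a ≤ rA y) :
    ∀ (n : ℕ) (x : V) (F : Finset (List V)),
      (∀ l ∈ F, (GoodA S A l ∧ l.length ≤ n) ∨ GoodC S n l) →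
      ∑ l ∈ F, wtp P x l ≤ Phi P S rA n x := by
  classical
  intro n
  induction n with
  | zero =>
    intro x F hF
    have hsub : F ⊆ {[]} := by
      intro l hl
      rcases hF l hl with ⟨hg, hlen⟩ | ⟨hlen, _⟩
      · exact absurd (List.length_eq_zero_iff.mp (Nat.le_zero.mp hlen)) (goodA_ne_nil hg)
      · simpa using List.length_eq_zero_iff.mp hlen
    have h1 : ∑ l ∈ F, wtp P x l ≤ ∑ l ∈ ({[]} : Finset (List V)), wtp P x l :=
      Finset.sum_le_sum_of_subset_of_nonneg hsub (fun l _ _ => wtp_nonneg h0 x l)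
    simpa [Phi, wtp] using h1
  | succ n ih =>
    intro x F hF
    set pA : List V → Prop := fun l => ∃ a ∈ A, l = [a] with hpA
    have hsplit := Finset.sum_filter_add_sum_filter_not F pA (wtp P x)
    set F₁ := F.filter pA with hF₁
    set F₂ := F.filter (fun l => ¬ pA l) with hF₂
    set f : List V → V := fun l => l.getD 0 x with hf
    have himg : ∀ l ∈ F₁, l = [f l] ∧ f l ∈ A := by
      intro l hl
      obtain ⟨a, ha, rfl⟩ := (Finset.mem_filter.mp hl).2
      exact ⟨rfl, ha⟩
    have hinj : ∀ l₁ ∈ F₁, ∀ l₂ ∈ F₁, f l₁ = f l₂ → l₁ = l₂ := by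
      intro l₁ h₁ l₂ h₂ he
      rw [(himg l₁ h₁).1, (himg l₂ h₂).1, he]
    have hb₁ : ∑ l ∈ F₁, wtp P x l ≤ rA x := by
      have h1 : ∑ l ∈ F₁, wtp P x l = ∑ l ∈ F₁, P x (f l) := by
        refine Finset.sum_congr rfl fun l hl => ?_
        obtain ⟨a, ha, rfl⟩ := (Finset.mem_filter.mp hl).2
        simp [hf, wtp]
      have h2 : ∑ a ∈ F₁.image f, P x a = ∑ l ∈ F₁, P x (f l) := Finset.sum_image hinj
      rw [h1, ← h2]
      refine hsum x _ fun a ha => ?_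
      obtain ⟨l, hl, rfl⟩ := Finset.mem_image.mp ha
      exact (himg l hl).2
    have hne : ∀ l ∈ F₂, ∃ y t, l = y :: t ∧ y ∈ S ∧
        ((GoodA S A t ∧ t.length ≤ n) ∨ GoodC S n t) := by
      intro l hl
      obtain ⟨hlF, hnpA⟩ := Finset.mem_filter.mp hl
      rcases hF l hlF with ⟨hg, hlen⟩ | ⟨hlen, hmem⟩
      · obtain ⟨y, t, rfl⟩ : ∃ y t, l = y :: t := by
          cases l with
          | nil => exact absurd rfl (goodA_ne_nil hg)
          | cons y t => exact ⟨y, t, rfl⟩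
        cases t with
        | nil => exact absurd ⟨y, hg, rfl⟩ hnpA
        | cons z t' =>
          obtain ⟨hyS, hgt⟩ := goodA_cons (by simp) hg
          exact ⟨y, z :: t', rfl, hyS, Or.inl ⟨hgt, by simpa using Nat.succ_le_succ_iff.mp hlen⟩⟩
      · obtain ⟨y, t, rfl⟩ : ∃ y t, l = y :: t := by
          cases l with
          | nil => simp at hlen
          | cons y t => exact ⟨y, t, rfl⟩
        refine ⟨y, t, rfl, hmem y (by simp), Or.inr ⟨by simpa using hlen, fun z hz => hmem z (by simp [hz])⟩⟩
    set T₂ := F₂.image f with hT₂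
    have hmapsto : ∀ l ∈ F₂, f l ∈ T₂ := fun l hl => Finset.mem_image_of_mem f hl
    have hfib := Finset.sum_fiberwise_of_maps_to hmapsto (wtp P x)
    have hhead : ∀ l ∈ F₂, l = f l :: l.tail := by
      intro l hl
      obtain ⟨y, t, rfl, -, -⟩ := hne l hl
      rfl
    have hinner : ∀ y ∈ T₂, ∑ l ∈ F₂.filter (fun l => f l = y), wtp P x l ≤ P x y * Phi P S rA n y := by
      intro y hy
      have h1 : ∀ l ∈ F₂.filter (fun l => f l = y), wtp P x l = P x y * wtp P y l.tail := by
        intro l hl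
        obtain ⟨hl2, hfl⟩ := Finset.mem_filter.mp hl
        conv_lhs => rw [hhead l hl2]
        rw [hfl, wtp]
      rw [Finset.sum_congr rfl h1, ← Finset.mul_sum]
      refine mul_le_mul_of_nonneg_left ?_ (h0 x y)
      have hinj2 : ∀ l₁ ∈ F₂.filter (fun l => f l = y), ∀ l₂ ∈ F₂.filter (fun l => f l = y),
          l₁.tail = l₂.tail → l₁ = l₂ := by
        intro l₁ h₁ l₂ h₂ he
        obtain ⟨h₁', hf₁⟩ := Finset.mem_filter.mp h₁
        obtain ⟨h₂', hf₂⟩ := Finset.mem_filter.mp h₂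
        rw [hhead l₁ h₁', hhead l₂ h₂', hf₁, hf₂, he]
      have h2 : ∑ t ∈ (F₂.filter (fun l => f l = y)).image List.tail, wtp P y t
          = ∑ l ∈ F₂.filter (fun l => f l = y), wtp P y l.tail := Finset.sum_image hinj2
      rw [← h2]
      refine ih y _ fun t ht => ?_
      obtain ⟨l, hl, rfl⟩ := Finset.mem_image.mp ht
      obtain ⟨hl2, -⟩ := Finset.mem_filter.mp hl
      obtain ⟨y', t', rfl, -, hcon⟩ := hne l hl2
      simpa using hcon
    have hb₂ : ∑ l ∈ F₂, wtp P x l ≤ Qop P S (Phi P S rA n) x := by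
      rw [← hfib]
      have hstep : ∑ y ∈ T₂, ∑ l ∈ F₂.filter (fun l => f l = y), wtp P x l
          ≤ ∑ y ∈ T₂, P x y * Phi P S rA n y := Finset.sum_le_sum hinner
      refine le_trans hstep ?_
      refine Finset.sum_le_sum_of_subset_of_nonneg ?_ fun y _ _ =>
        mul_nonneg (h0 x y) (Phi_nonneg h0 hrAnn n y)
      intro y hy
      obtain ⟨l, hl, rfl⟩ := Finset.mem_image.mp hy
      obtain ⟨y', t', rfl, hyS, -⟩ := hne l hl
      exact hyS
    calc ∑ l ∈ F, wtp P x l = ∑ l ∈ F₁, wtp P x l + ∑ l ∈ F₂, wtp P x l := hsplit.symm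
      _ ≤ rA x + Qop P S (Phi P S rA n) x := add_le_add hb₁ hb₂
      _ = Phi P S rA (n+1) x := (Phi_succ rA n x).symm

open scoped Classical in
lemma mu_lb {V : Type*} [Countable V] [MeasurableSpace V]
    (P : V → V → ℝ) (h0 : ∀ x y, 0 ≤ P x y)
    (A B : Set V) (S : Finset V) (hS : ∀ z, z ∈ S ↔ z ∉ A ∧ z ∉ B)
    (rA : V → ℝ) (hrAnn : ∀ y, 0 ≤ rA y)
    (hsum : ∀ (y : V) (T : Finset V), (∀ a ∈ T, a ∈ A) → ∑ a ∈ T, P y a ≤ rA y)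
    (x : V) (ν : Measure (ℕ → V)) (hprob : ν Set.univ = 1)
    (hcyl : ∀ (n : ℕ) (path : ℕ → V), ν {ω | ∀ i ≤ n, ω i = path i} =
      (if path 0 = x then 1 else 0) *
        ∏ i ∈ Finset.range n, ENNReal.ofReal (P (path i) (path (i + 1))))
    (n : ℕ) :
    1 ≤ ν {ω | ∃ t, 0 < t ∧ ω t ∈ B ∧ ∀ s, 0 < s → s < t → ω s ∉ A ∪ B}
      + ENNReal.ofReal (Phi P S rA n x) := by
  classical
  set E : Set (ℕ → V) := {ω | ∃ t, 0 < t ∧ ω t ∈ B ∧ ∀ s, 0 < s → s < t → ω s ∉ A ∪ B} with hE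
  set Z : Set (ℕ → V) := {ω | ω 0 ≠ x} with hZ
  have hZ0 : ν Z = 0 := by
    have hsub : Z ⊆ ⋃ (y : {y : V // y ≠ x}), {ω : ℕ → V | ∀ i ≤ 0, ω i = (fun _ => y.val) i} := by
      intro ω hω
      exact Set.mem_iUnion.mpr ⟨⟨ω 0, hω⟩, fun i hi => by simp [Nat.le_zero.mp hi]⟩
    refine le_antisymm ?_ zero_le
    refine le_trans (measure_mono hsub) (le_trans (measure_iUnion_le _) (le_of_eq ?_))
    have : ∀ (y : {y : V // y ≠ x}),
        ν {ω : ℕ → V | ∀ i ≤ 0, ω i = (fun _ => y.val) i} = 0 := by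
      intro y
      rw [hcyl 0 (fun _ => y.val)]
      simp [y.prop]
    calc ∑' (y : {y : V // y ≠ x}), ν {ω : ℕ → V | ∀ i ≤ 0, ω i = (fun _ => y.val) i}
        = ∑' (_ : {y : V // y ≠ x}), (0:ℝ≥0∞) := tsum_congr this
      _ = 0 := by simp
  set Cyl : List V → Set (ℕ → V) :=
    fun l => {ω | ∀ i ≤ l.length, ω i = (x :: l).getD i x} with hCyl
  have hCylval : ∀ l : List V, ν (Cyl l) = ENNReal.ofReal (wtp P x l) := by
    intro l
    have := hcyl l.length (fun i => (x :: l).getD i x)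
    rw [hCyl]
    simp only []
    rw [this]
    have h00 : (x :: l).getD 0 x = x := rfl
    rw [h00, if_pos rfl, one_mul, wtp_eq_prod x x l,
      ENNReal.ofReal_prod_of_nonneg (fun i _ => h0 _ _)]
  set Idx : Type _ := {l : List V // (GoodA S A l ∧ l.length ≤ n) ∨ GoodC S n l} with hIdx
  have hcover : Eᶜ ⊆ Z ∪ ⋃ (l : Idx), Cyl l.val := by
    intro ω hω
    by_cases hω0 : ω 0 = x
    swap
    · exact Or.inl hω0
    right
    have hnE : ω ∉ E := hω
    have key : ∀ t, 0 < t → ω t ∉ S → (ω t ∈ A ∨ ω t ∈ B) := by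
      intro t ht hts
      by_contra hc
      push_neg at hc
      exact hts ((hS (ω t)).mpr hc)
    by_cases hex : ∃ t, 0 < t ∧ ω t ∉ S
    · set t₀ := Nat.find hex with ht₀
      obtain ⟨ht₀pos, ht₀S⟩ := Nat.find_spec hex
      have hmin : ∀ s, 0 < s → s < t₀ → ω s ∈ S := by
        intro s hs hst
        by_contra hc
        exact Nat.find_min hex hst ⟨hs, hc⟩
      have htA : ω t₀ ∈ A := by
        rcases key t₀ ht₀pos ht₀S with h | h
        · exact h
        · exact absurd ⟨t₀, ht₀pos, h, fun s hs hst => by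
            have := hmin s hs hst
            rw [hS] at this
            simp [this.1, this.2]⟩ hnE
      by_cases htn : t₀ ≤ n
      · set l : List V := (List.range t₀).map (fun j => ω (j + 1)) with hl
        have hlen : l.length = t₀ := by simp [hl]
        have hgood : GoodA S A l := by
          have h1 : t₀ - 1 + 1 = t₀ := Nat.succ_pred_eq_of_pos ht₀pos
          have := goodA_mk (S := S) (A := A) (t₀ - 1) (fun j => ω (j + 1))
            (fun i hi => hmin (i + 1) (Nat.succ_pos i) (by omega)) (by show ω (t₀ - 1 + 1) ∈ A; rw [h1]; exact htA)
          rwa [h1] at this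
        refine Set.mem_iUnion.mpr ⟨⟨l, Or.inl ⟨hgood, by omega⟩⟩, ?_⟩
        intro i hi
        rw [hlen] at hi
        match i with
        | 0 => simpa using hω0
        | (j + 1) =>
          rw [List.getD_cons_succ]
          simp only [hl]
          rw [getD_map_range _ _ _ _ (by omega)]
      · set l : List V := (List.range n).map (fun j => ω (j + 1)) with hl
        have hlen : l.length = n := by simp [hl]
        have hgood : GoodC S n l :=
          goodC_mk n _ (fun i hi => hmin (i + 1) (Nat.succ_pos i) (by omega))
        refine Set.mem_iUnion.mpr ⟨⟨l, Or.inr hgood⟩, ?_⟩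
        intro i hi
        rw [hlen] at hi
        match i with
        | 0 => simpa using hω0
        | (j + 1) =>
          rw [List.getD_cons_succ]
          simp only [hl]
          rw [getD_map_range _ _ _ _ (by omega)]
    · push_neg at hex
      set l : List V := (List.range n).map (fun j => ω (j + 1)) with hl
      have hlen : l.length = n := by simp [hl]
      have hgood : GoodC S n l :=
        goodC_mk n _ (fun i _ => hex (i + 1) (Nat.succ_pos i))
      refine Set.mem_iUnion.mpr ⟨⟨l, Or.inr hgood⟩, ?_⟩
      intro i hi
      rw [hlen] at hi
      match i with
      | 0 => simpa using hω0
      | (j + 1) =>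
        rw [List.getD_cons_succ]
        simp only [hl]
        rw [getD_map_range _ _ _ _ (by omega)]
  have hUnion : ν (⋃ (l : Idx), Cyl l.val) ≤ ENNReal.ofReal (Phi P S rA n x) := by
    refine le_trans (measure_iUnion_le _) ?_
    have hval : ∀ l : Idx, ν (Cyl l.val) = ENNReal.ofReal (wtp P x l.val) :=
      fun l => hCylval l.val
    calc ∑' (l : Idx), ν (Cyl l.val) = ∑' (l : Idx), ENNReal.ofReal (wtp P x l.val) := by
          exact tsum_congr hval
      _ ≤ ENNReal.ofReal (Phi P S rA n x) := by
          rw [ENNReal.tsum_eq_iSup_sum]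
          refine iSup_le fun F => ?_
          rw [← ENNReal.ofReal_sum_of_nonneg (fun l _ => wtp_nonneg h0 x l.val)]
          refine ENNReal.ofReal_le_ofReal ?_
          have hinj : ∀ l₁ ∈ F, ∀ l₂ ∈ F, (l₁ : Idx).val = l₂.val → l₁ = l₂ :=
            fun l₁ _ l₂ _ h => Subtype.ext h
          have himage : ∑ l ∈ F.image Subtype.val, wtp P x l = ∑ l ∈ F, wtp P x l.val :=
            Finset.sum_image hinj
          rw [← himage]
          refine pathsum_le h0 A rA hrAnn hsum n x _ fun l hl => ?_
          obtain ⟨⟨l', hl'⟩, -, rfl⟩ := Finset.mem_image.mp hl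
          exact hl'
  have h1 : ν Set.univ ≤ ν E + ν Eᶜ := by
    refine le_trans (measure_mono (by simp : Set.univ ⊆ E ∪ Eᶜ)) (measure_union_le _ _)
  have h2 : ν Eᶜ ≤ ENNReal.ofReal (Phi P S rA n x) := by
    refine le_trans (measure_mono hcover) (le_trans (measure_union_le _ _) ?_)
    rw [hZ0, zero_add]
    exact hUnion
  calc (1 : ℝ≥0∞) = ν Set.univ := hprob.symm
    _ ≤ ν E + ν Eᶜ := h1
    _ ≤ ν E + ENNReal.ofReal (Phi P S rA n x) := add_le_add_right h2 _

lemma exists_path {V : Type*} {R : V → V → Prop} {x y : V} (h : Relation.ReflTransGen R x y) :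
    ∃ (m : ℕ) (w : ℕ → V), w 0 = x ∧ w m = y ∧ ∀ i < m, R (w i) (w (i + 1)) := by
  induction h with
  | refl => exact ⟨0, fun _ => x, rfl, rfl, by omega⟩
  | @tail b c hxb hbc ih =>
    obtain ⟨m, w, hw0, hwm, hR⟩ := ih
    refine ⟨m + 1, fun i => if i ≤ m then w i else c, by simp [hw0], by simp, ?_⟩
    intro i hi
    rcases Nat.lt_or_ge i m with h' | h'
    · simpa [Nat.le_of_lt h', Nat.succ_le_of_lt h'] using hR i h'
    · have him : i = m := by omega
      subst him
      simpa [hwm] using hbc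

lemma q_tendsto_zero {V : Type*} {P : V → V → ℝ} {S : Finset V}
    (h0 : ∀ x y, 0 ≤ P x y) (h1 : ∀ y, Qop P S (fun _ => 1) y ≤ (1 : ℝ))
    (hesc : ∀ z ∈ S, ∃ δ : ℝ, 0 < δ ∧ ∃ k : ℕ,
      ∀ n ≥ k, (Qop P S)^[n] (fun _ => (1:ℝ)) z ≤ 1 - δ) (y : V) :
    Filter.Tendsto (fun n => (Qop P S)^[n] (fun _ => (1:ℝ)) y) Filter.atTop (nhds 0) := by
  classical
  set q : ℕ → V → ℝ := fun n z => (Qop P S)^[n] (fun _ => (1:ℝ)) z with hq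
  have hqnn : ∀ n z, 0 ≤ q n z := fun n z => iter_nonneg h0 (fun _ => zero_le_one) n z
  have hanti : ∀ z, Antitone (fun n => q n z) := by
    intro z
    refine antitone_nat_of_succ_le fun n => ?_
    have : q (n + 1) z = (Qop P S)^[n] (Qop P S (fun _ => 1)) z := by
      rw [hq]
      simp only [Function.iterate_succ_apply]
    rw [this]
    exact iter_mono h0 h1 n z
  rcases S.eq_empty_or_nonempty with hSe | hSne
  · have hz : ∀ n, 1 ≤ n → q n y = 0 := by
      intro n hn
      have h2 : q n y ≤ q 1 y := hanti y hn
      have h3 : q 1 y = 0 := by simp [hq, Qop, hSe]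
      exact le_antisymm (h3 ▸ h2) (hqnn n y)
    refine Filter.Tendsto.congr' ?_ tendsto_const_nhds
    filter_upwards [Filter.eventually_ge_atTop 1] with n hn
    exact (hz n hn).symm
  · have hesc' : ∀ z : V, ∃ p : ℝ × ℕ, 0 < p.1 ∧
        (z ∈ S → ∀ n ≥ p.2, q n z ≤ 1 - p.1) := by
      intro z
      by_cases hz : z ∈ S
      · obtain ⟨δ, hδ, k, hk⟩ := hesc z hz
        exact ⟨(δ, k), hδ, fun _ => hk⟩
      · exact ⟨(1, 0), one_pos, fun h => absurd h hz⟩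
    choose p hppos hpk using hesc'
    set N : ℕ := S.sup (fun z => (p z).2) + 1 with hN
    set δ : ℝ := S.inf' hSne (fun z => (p z).1) with hδ
    have hδpos : 0 < δ := by
      rw [hδ, Finset.lt_inf'_iff]
      exact fun z _ => hppos z
    have hclaim1 : ∀ z ∈ S, q N z ≤ 1 - δ := by
      intro z hz
      have h2 : q N z ≤ 1 - (p z).1 :=
        hpk z hz N (by calc (p z).2 ≤ S.sup (fun z => (p z).2) := Finset.le_sup (f := fun z => (p z).2) hz
          _ ≤ N := Nat.le_succ _)
      have h3 : δ ≤ (p z).1 := Finset.inf'_le _ hz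
      linarith
    set c : ℝ := 1 - δ with hc
    have hc1 : c < 1 := by rw [hc]; linarith
    have hc0 : 0 ≤ c := by
      obtain ⟨z, hz⟩ := hSne
      have := hclaim1 z hz
      have := hqnn N z
      linarith
    have hclaim2 : ∀ m, ∀ z ∈ S, q (m * N + N) z ≤ c ^ (m + 1) := by
      intro m
      induction m with
      | zero => intro z hz; simpa using hclaim1 z hz
      | succ m ih =>
        intro z hz
        have harith : (m + 1) * N + N = N + (m * N + N) := by ring
        have hN' : N = S.sup (fun z => (p z).2) + 1 := hN
        have h2 : q ((m+1) * N + N) z = (Qop P S)^[N] ((Qop P S)^[m * N + N] (fun _ => 1)) z := by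
          rw [hq]
          simp only [harith, Function.iterate_add_apply]
        have h3 : (Qop P S)^[N] ((Qop P S)^[m * N + N] (fun _ => 1)) z
            ≤ (Qop P S)^[N] (fun _ => c ^ (m + 1) * 1) z := by
          rw [hN']
          exact iter_mono_on h0 (fun w hw => by simpa using ih w hw) _ z
        have h4 : (Qop P S)^[N] (fun _ => c ^ (m + 1) * (1:ℝ)) z = c ^ (m + 1) * q N z := by
          rw [hq, iter_smul (c ^ (m+1)) (fun _ => (1:ℝ)) N]
        rw [h2]
        refine le_trans h3 ?_
        rw [h4]
        calc c ^ (m+1) * q N z ≤ c ^ (m+1) * c :=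
              mul_le_mul_of_nonneg_left (hclaim1 z hz) (pow_nonneg hc0 _)
          _ = c ^ (m+1+1) := (pow_succ c (m+1)).symm
    have hclaim3 : ∀ m y', q (m * N + N + 1) y' ≤ c ^ (m + 1) := by
      intro m y'
      have h2 : q (m * N + N + 1) y' = Qop P S ((Qop P S)^[m * N + N] (fun _ => 1)) y' := by
        rw [hq]
        have : m * N + N + 1 = 1 + (m * N + N) := by ring
        simp only [this, Function.iterate_add_apply, Function.iterate_one]
      have h3 : Qop P S ((Qop P S)^[m * N + N] (fun _ => 1)) y'
          ≤ Qop P S (fun _ => c ^ (m + 1) * 1) y' :=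
        Qop_mono_on h0 (fun w hw => by simpa using hclaim2 m w hw) y'
      have h4 : Qop P S (fun _ => c ^ (m + 1) * (1:ℝ)) y' = c ^ (m + 1) * Qop P S (fun _ => 1) y' := by
        rw [Qop_smul (c ^ (m+1)) (fun _ => (1:ℝ))]
      rw [h2]
      refine le_trans h3 ?_
      rw [h4]
      calc c ^ (m+1) * Qop P S (fun _ => 1) y' ≤ c ^ (m+1) * 1 :=
            mul_le_mul_of_nonneg_left (h1 y') (pow_nonneg hc0 _)
        _ = c ^ (m + 1) := mul_one _
    rw [Metric.tendsto_atTop]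
    intro ε hε
    obtain ⟨m, hm⟩ := exists_pow_lt_of_lt_one hε hc1
    refine ⟨m * N + N + 1, fun n hn => ?_⟩
    have h2 : q n y ≤ q (m * N + N + 1) y := hanti y hn
    have h3 : c ^ (m + 1) ≤ c ^ m := pow_le_pow_of_le_one hc0 (le_of_lt hc1) (Nat.le_succ m)
    have h4 : q n y < ε := lt_of_le_of_lt (le_trans h2 (le_trans (hclaim3 m y) h3)) hm
    rw [Real.dist_eq, abs_of_nonneg (by linarith [hqnn n y] : (0:ℝ) ≤ q n y - 0)]
    simpa using h4

end Stmt1Aux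


open MeasureTheory

open Stmt1Aux Filter in
open scoped Classical in
/-- under the hypotheses of the escape-probability lemma, for any nonempty
`A` with `π(A) < ∞` and any `B` disjoint from `A` with `(A ∪ B)ᶜ` finite, the chain started
from `π_A` enters `A ∪ B` for the first positive time at a point of `B` with probability
at least `lam`. -/
theorem stmt_1 {V : Type*} [Countable V] [MeasurableSpace V]
    (P : V → V → ℝ) (π : V → ℝ) (μ : V → Measure (ℕ → V)) (lam : ℝ)
    (hP : IsTransitionKernel P) (hirr : KernelIrreducible P) (hrev : IsReversing P π)
    (hinf : ¬ Summable π) (hμ : IsMarkovPathLaw P μ)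
    (hlam : 0 < lam) (hgap : SpectralGapLB P π lam)
    (A B : Set V) (hA : A.Nonempty)
    (hAfin : Summable (fun x => if x ∈ A then π x else 0))
    (hdisj : Disjoint A B) (hcofin : (A ∪ B)ᶜ.Finite) :
    ENNReal.ofReal lam ≤
      (∑' x : V, (if x ∈ A then ENNReal.ofReal (π x) else 0) *
          μ x {ω | ∃ t, 0 < t ∧ ω t ∈ B ∧ ∀ s, 0 < s → s < t → ω s ∉ A ∪ B}) /
        ENNReal.ofReal (∑' x : V, if x ∈ A then π x else 0) := by
  obtain ⟨h0, hrow⟩ := hP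
  obtain ⟨hπpos, -⟩ := hrev
  set S : Finset V := hcofin.toFinset with hSdef
  have hS : ∀ z, z ∈ S ↔ z ∉ A ∧ z ∉ B := by
    intro z
    rw [hSdef, Set.Finite.mem_toFinset, Set.mem_compl_iff, Set.mem_union]
    tauto
  set rA : V → ℝ := fun y => ∑' z, if z ∈ A then P y z else 0 with hrA
  set rB : V → ℝ := fun y => ∑' z, if z ∈ B then P y z else 0 with hrB
  have hsummA : ∀ y, Summable (fun z => if z ∈ A then P y z else 0) := fun y =>
    Summable.of_nonneg_of_le (fun z => by split <;> simp [h0]) (fun z => by split <;> simp [h0])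
      (hrow y).summable
  have hsummB : ∀ y, Summable (fun z => if z ∈ B then P y z else 0) := fun y =>
    Summable.of_nonneg_of_le (fun z => by split <;> simp [h0]) (fun z => by split <;> simp [h0])
      (hrow y).summable
  have hsummS : ∀ y, Summable (fun z => if z ∈ S then P y z else 0) := fun y =>
    Summable.of_nonneg_of_le (fun z => by split <;> simp [h0]) (fun z => by split <;> simp [h0])
      (hrow y).summable
  have hrAnn : ∀ y, 0 ≤ rA y := fun y => tsum_nonneg (fun z => by split <;> simp [h0])
  have hrBnn : ∀ y, 0 ≤ rB y := fun y => tsum_nonneg (fun z => by split <;> simp [h0])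
  have hsum : ∀ (y : V) (T : Finset V), (∀ a ∈ T, a ∈ A) → ∑ a ∈ T, P y a ≤ rA y := by
    intro y T hT
    have h1 : ∑ a ∈ T, P y a = ∑ a ∈ T, (if a ∈ A then P y a else 0) :=
      Finset.sum_congr rfl fun a ha => by rw [if_pos (hT a ha)]
    rw [h1]
    exact Summable.sum_le_tsum T (fun a _ => by split <;> simp [h0]) (hsummA y)
  have hsumB : ∀ (y : V) (T : Finset V), (∀ a ∈ T, a ∈ B) → ∑ a ∈ T, P y a ≤ rB y := by
    intro y T hT
    have h1 : ∑ a ∈ T, P y a = ∑ a ∈ T, (if a ∈ B then P y a else 0) :=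
      Finset.sum_congr rfl fun a ha => by rw [if_pos (hT a ha)]
    rw [h1]
    exact Summable.sum_le_tsum T (fun a _ => by split <;> simp [h0]) (hsummB y)
  have hpart : ∀ y, rA y + rB y + Qop P S (fun _ => 1) y = 1 := by
    intro y
    have hdecomp : ∀ z, P y z = (if z ∈ A then P y z else 0) + (if z ∈ B then P y z else 0)
        + (if z ∈ S then P y z else 0) := by
      intro z
      by_cases hzA : z ∈ A
      · have hzB : z ∉ B := Set.disjoint_left.mp hdisj hzA
        have hzS : z ∉ S := fun h => ((hS z).mp h).1 hzA
        simp [hzA, hzB, hzS]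
      · by_cases hzB : z ∈ B
        · have hzS : z ∉ S := fun h => ((hS z).mp h).2 hzB
          simp [hzA, hzB, hzS]
        · have hzS : z ∈ S := (hS z).mpr ⟨hzA, hzB⟩
          simp [hzA, hzB, hzS]
    have htsum : ∑' z, P y z = rA y + rB y + ∑' z, (if z ∈ S then P y z else 0) := by
      calc ∑' z, P y z
          = ∑' z, ((if z ∈ A then P y z else 0) + (if z ∈ B then P y z else 0)
            + (if z ∈ S then P y z else 0)) := tsum_congr hdecomp
        _ = rA y + rB y + ∑' z, (if z ∈ S then P y z else 0) := by
            rw [Summable.tsum_add ((hsummA y).add (hsummB y)) (hsummS y), Summable.tsum_add (hsummA y) (hsummB y)]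
    have hqs : ∑' z, (if z ∈ S then P y z else 0) = Qop P S (fun _ => 1) y := by
      rw [tsum_eq_sum (s := S) (fun z hz => if_neg hz)]
      simp [Qop]
    rw [← hqs, ← htsum, (hrow y).tsum_eq]
  have h1 : ∀ y, Qop P S (fun _ => 1) y ≤ (1:ℝ) := by
    intro y
    have := hpart y
    have := hrAnn y
    have := hrBnn y
    linarith
  set rAB : V → ℝ := fun y => rA y + rB y with hrAB
  have htel : ∀ (n : ℕ) (y : V), ∑ i ∈ Finset.range n, (Qop P S)^[i] rAB y
      = 1 - (Qop P S)^[n] (fun _ => 1) y := by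
    intro n y
    have hre : rAB = fun z => (fun _ => (1:ℝ)) z - Qop P S (fun _ => 1) z := by
      funext z
      have := hpart z
      simp only [hrAB]
      linarith
    have hterm : ∀ i, (Qop P S)^[i] rAB y
        = (Qop P S)^[i] (fun _ => 1) y - (Qop P S)^[i+1] (fun _ => 1) y := by
      intro i
      rw [hre, iter_sub]
      simp only [Function.iterate_succ_apply]
    calc ∑ i ∈ Finset.range n, (Qop P S)^[i] rAB y
        = ∑ i ∈ Finset.range n, ((Qop P S)^[i] (fun _ => 1) y - (Qop P S)^[i+1] (fun _ => 1) y) :=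
          Finset.sum_congr rfl fun i _ => hterm i
      _ = (Qop P S)^[0] (fun _ => 1) y - (Qop P S)^[n] (fun _ => 1) y :=
          Finset.sum_range_sub' (fun i => (Qop P S)^[i] (fun _ => 1) y) n
      _ = 1 - (Qop P S)^[n] (fun _ => 1) y := by simp
  have hrABnn : ∀ y, 0 ≤ rAB y := fun y => add_nonneg (hrAnn y) (hrBnn y)
  have hesc : ∀ z ∈ S, ∃ δ : ℝ, 0 < δ ∧ ∃ k : ℕ,
      ∀ n ≥ k, (Qop P S)^[n] (fun _ => (1:ℝ)) z ≤ 1 - δ := by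
    intro z hz
    obtain ⟨a, ha⟩ := hA
    obtain ⟨m, w, hw0, hwm, hR⟩ := exists_path (hirr z a)
    have hma : w m ∉ S := by
      rw [hwm]
      exact fun h => ((hS a).mp h).1 ha
    have hexj : ∃ j, w j ∉ S := ⟨m, hma⟩
    set j := Nat.find hexj with hj
    have hjS : w j ∉ S := Nat.find_spec hexj
    have hmin : ∀ i < j, w i ∈ S := fun i hi => not_not.mp (Nat.find_min hexj hi)
    have hj1 : 1 ≤ j := by
      rcases Nat.eq_zero_or_pos j with h | h
      · exact absurd (h ▸ hjS) (by rw [hw0]; exact fun hc => hc hz)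
      · exact h
    have hjm : j ≤ m := Nat.find_min' hexj hma
    have hpath : ∀ i ≤ j - 1, w i ∈ S := fun i hi => hmin i (by omega)
    have hlb := iter_path_lb h0 hrABnn (j - 1) w hpath
    rw [hw0] at hlb
    have hppos : 0 < ∏ i ∈ Finset.range (j-1), P (w i) (w (i+1)) :=
      Finset.prod_pos fun i hi => hR i (by simp at hi; omega)
    have hstep : 0 < P (w (j-1)) (w j) := by
      have h9 := hR (j-1) (by omega)
      have heq : j - 1 + 1 = j := by omega
      rwa [heq] at h9
    have hrABlb : P (w (j-1)) (w j) ≤ rAB (w (j-1)) := by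
      have hjAB : w j ∈ A ∨ w j ∈ B := by
        by_contra hc
        push_neg at hc
        exact hjS ((hS _).mpr hc)
      rcases hjAB with hjA | hjB
      · have hle : P (w (j-1)) (w j) ≤ rA (w (j-1)) := by
          have := hsum (w (j-1)) {w j} (by simpa using hjA)
          simpa using this
        have := hrBnn (w (j-1))
        simp only [hrAB]; linarith
      · have hle : P (w (j-1)) (w j) ≤ rB (w (j-1)) := by
          have := hsumB (w (j-1)) {w j} (by simpa using hjB)
          simpa using this
        have := hrAnn (w (j-1))
        simp only [hrAB]; linarith
    have hδpos : 0 < (Qop P S)^[j-1] rAB z := by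
      refine lt_of_lt_of_le ?_ hlb
      have h2 : 0 < rAB (w (j-1)) := lt_of_lt_of_le hstep hrABlb
      exact mul_pos hppos h2
    refine ⟨(Qop P S)^[j-1] rAB z, hδpos, j, fun n hn => ?_⟩
    have h2 : (Qop P S)^[j-1] rAB z ≤ ∑ i ∈ Finset.range n, (Qop P S)^[i] rAB z :=
      Finset.single_le_sum (fun i _ => iter_nonneg h0 hrABnn i z)
        (Finset.mem_range.mpr (by omega))
    have h3 := htel n z
    linarith
  have hq0 : ∀ y, Tendsto (fun n => (Qop P S)^[n] (fun _ => (1:ℝ)) y) atTop (nhds 0) :=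
    q_tendsto_zero h0 h1 hesc
  have hsummAB : ∀ y, Summable (fun i => (Qop P S)^[i] rAB y) := by
    intro y
    refine summable_of_sum_range_le (c := 1) (fun i => iter_nonneg h0 hrABnn i y) fun n => ?_
    rw [htel n y]
    have h9 := iter_nonneg (S := S) h0 (fun _ : V => (zero_le_one : (0:ℝ) ≤ 1)) n y
    linarith
  have hrAle : ∀ z, rA z ≤ rAB z := fun z => by simp only [hrAB]; linarith [hrBnn z]
  have hrBle : ∀ z, rB z ≤ rAB z := fun z => by simp only [hrAB]; linarith [hrAnn z]
  have hsumg : ∀ y, Summable (fun i => (Qop P S)^[i] rA y) := fun y =>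
    Summable.of_nonneg_of_le (fun i => iter_nonneg h0 hrAnn i y)
      (fun i => iter_mono h0 hrAle i y) (hsummAB y)
  have hsumh : ∀ y, Summable (fun i => (Qop P S)^[i] rB y) := fun y =>
    Summable.of_nonneg_of_le (fun i => iter_nonneg h0 hrBnn i y)
      (fun i => iter_mono h0 hrBle i y) (hsummAB y)
  set gser : V → ℝ := fun y => ∑' i, (Qop P S)^[i] rA y with hgser
  set hser : V → ℝ := fun y => ∑' i, (Qop P S)^[i] rB y with hhser
  have hiterAB : ∀ i y, (Qop P S)^[i] rAB y = (Qop P S)^[i] rA y + (Qop P S)^[i] rB y := by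
    intro i y
    have h2 : rAB = fun z => rA z + rB z := rfl
    rw [h2, iter_add]
  have hgh1 : ∀ y, gser y + hser y = 1 := by
    intro y
    have hAB1 : ∑' i, (Qop P S)^[i] rAB y = 1 := by
      have ht1 : Tendsto (fun n => ∑ i ∈ Finset.range n, (Qop P S)^[i] rAB y) atTop
          (nhds (∑' i, (Qop P S)^[i] rAB y)) := (hsummAB y).hasSum.tendsto_sum_nat
      have ht2 : Tendsto (fun n => ∑ i ∈ Finset.range n, (Qop P S)^[i] rAB y) atTop
          (nhds 1) := by
        have he : (fun n => ∑ i ∈ Finset.range n, (Qop P S)^[i] rAB y)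
            = fun n => 1 - (Qop P S)^[n] (fun _ => 1) y := funext fun n => htel n y
        rw [he]
        simpa using (tendsto_const_nhds (x := (1:ℝ))).sub (hq0 y)
      exact tendsto_nhds_unique ht1 ht2
    calc gser y + hser y = ∑' i, ((Qop P S)^[i] rA y + (Qop P S)^[i] rB y) :=
          (Summable.tsum_add (hsumg y) (hsumh y)).symm
      _ = ∑' i, (Qop P S)^[i] rAB y := tsum_congr fun i => (hiterAB i y).symm
      _ = 1 := hAB1
  have hgnn : ∀ y, 0 ≤ gser y := fun y => tsum_nonneg fun i => iter_nonneg h0 hrAnn i y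
  have hhnn : ∀ y, 0 ≤ hser y := fun y => tsum_nonneg fun i => iter_nonneg h0 hrBnn i y
  have hgle1 : ∀ y, gser y ≤ 1 := fun y => by linarith [hgh1 y, hhnn y]
  have hhle1 : ∀ y, hser y ≤ 1 := fun y => by linarith [hgh1 y, hgnn y]
  have hgrec : ∀ y, gser y = rA y + Qop P S gser y := by
    intro y
    have h2 : gser y = rA y + ∑' i, (Qop P S)^[i+1] rA y := by
      rw [hgser]
      simp only []
      rw [Summable.tsum_eq_zero_add (hsumg y)]
      simp
    have h3 : ∀ i : ℕ, (Qop P S)^[i+1] rA y = ∑ z ∈ S, P y z * (Qop P S)^[i] rA z := by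
      intro i
      rw [Function.iterate_succ_apply']
      rfl
    have h4 : ∑' i, (Qop P S)^[i+1] rA y = Qop P S gser y := by
      calc ∑' i, (Qop P S)^[i+1] rA y = ∑' i, ∑ z ∈ S, P y z * (Qop P S)^[i] rA z :=
            tsum_congr h3
        _ = ∑ z ∈ S, ∑' i, P y z * (Qop P S)^[i] rA z :=
            Summable.tsum_finsetSum fun z _ => (hsumg z).mul_left (P y z)
        _ = ∑ z ∈ S, P y z * gser z := Finset.sum_congr rfl fun z _ => tsum_mul_left
        _ = Qop P S gser y := rfl
    rw [h2, h4]
  set f : V → ℝ := fun y => if y ∈ A then 1 else if y ∈ B then 0 else gser y with hf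
  have hfcases : ∀ y, (y ∈ A ∧ f y = 1) ∨ (y ∈ B ∧ f y = 0) ∨ (y ∈ S ∧ f y = gser y) := by
    intro y
    by_cases hyA : y ∈ A
    · exact Or.inl ⟨hyA, by simp [hf, hyA]⟩
    · by_cases hyB : y ∈ B
      · exact Or.inr (Or.inl ⟨hyB, by simp [hf, hyA, hyB]⟩)
      · exact Or.inr (Or.inr ⟨(hS y).mpr ⟨hyA, hyB⟩, by simp [hf, hyA, hyB]⟩)
  have hfsq : ∀ y, π y * f y ^ 2
      = (if y ∈ A then π y else 0) + (if y ∈ S then π y * gser y ^ 2 else 0) := by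
    intro y
    rcases hfcases y with ⟨hyA, hfy⟩ | ⟨hyB, hfy⟩ | ⟨hyS, hfy⟩
    · have hyS : y ∉ S := fun h => ((hS y).mp h).1 hyA
      rw [hfy]
      simp [hyA, hyS]
    · have hyA : y ∉ A := fun h => Set.disjoint_left.mp hdisj h hyB
      have hyS : y ∉ S := fun h => ((hS y).mp h).2 hyB
      rw [hfy]
      simp [hyA, hyS]
    · have hyA : y ∉ A := fun h => ((hS y).mp hyS).1 h
      rw [hfy]
      simp [hyA, hyS]
  have hsummf2 : Summable (fun y => π y * f y ^ 2) := by
    have h2 : Summable (fun y => if y ∈ S then π y * gser y ^ 2 else 0) :=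
      summable_of_ne_finset_zero (s := S) fun y hy => if_neg hy
    have h3 := hAfin.add h2
    exact h3.congr fun y => (hfsq y).symm
  set πA : ℝ := ∑' x, if x ∈ A then π x else 0 with hπA
  have hπApos : 0 < πA := by
    obtain ⟨a, ha⟩ := hA
    have h2 : (if a ∈ A then π a else 0) ≤ πA := by
      refine Summable.le_tsum hAfin a fun b _ => ?_
      split
      · exact le_of_lt (hπpos _)
      · exact le_refl 0
    rw [if_pos ha] at h2
    exact lt_of_lt_of_le (hπpos a) h2
  have hften : πA ≤ ∑' y, π y * f y ^ 2 := by
    refine Summable.tsum_le_tsum (fun y => ?_) hAfin hsummf2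
    rcases hfcases y with ⟨hyA, hfy⟩ | ⟨hyB, hfy⟩ | ⟨hyS, hfy⟩
    · rw [if_pos hyA, hfy]; ring_nf; exact le_refl _
    · have hyA : y ∉ A := fun h => Set.disjoint_left.mp hdisj h hyB
      rw [if_neg hyA]
      exact mul_nonneg (le_of_lt (hπpos y)) (sq_nonneg _)
    · have hyA : y ∉ A := fun h => ((hS y).mp hyS).1 h
      rw [if_neg hyA]
      exact mul_nonneg (le_of_lt (hπpos y)) (sq_nonneg _)
  have hPf : ∀ y, ∑' z, P y z * f z = gser y := by
    intro y
    have hdec : ∀ z, P y z * f z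
        = (if z ∈ A then P y z else 0) + (if z ∈ S then P y z * gser z else 0) := by
      intro z
      rcases hfcases z with ⟨hzA, hfz⟩ | ⟨hzB, hfz⟩ | ⟨hzS, hfz⟩
      · have hzS : z ∉ S := fun h => ((hS z).mp h).1 hzA
        rw [hfz]
        simp [hzA, hzS]
      · have hzA : z ∉ A := fun h => Set.disjoint_left.mp hdisj h hzB
        have hzS : z ∉ S := fun h => ((hS z).mp h).2 hzB
        rw [hfz]
        simp [hzA, hzS]
      · have hzA : z ∉ A := fun h => ((hS z).mp hzS).1 h
        rw [hfz]
        simp [hzA, hzS]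
    have h2 : Summable (fun z => if z ∈ S then P y z * gser z else 0) :=
      summable_of_ne_finset_zero (s := S) fun z hz => if_neg hz
    calc ∑' z, P y z * f z
        = ∑' z, ((if z ∈ A then P y z else 0) + (if z ∈ S then P y z * gser z else 0)) :=
          tsum_congr hdec
      _ = rA y + ∑' z, (if z ∈ S then P y z * gser z else 0) := Summable.tsum_add (hsummA y) h2
      _ = rA y + Qop P S gser y := by
          rw [tsum_eq_sum (s := S) (fun z hz => if_neg hz)]
          congr 1
          exact Finset.sum_congr rfl fun z hz => if_pos hz
      _ = gser y := (hgrec y).symm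
  have htval : ∀ y, π y * f y * (f y - ∑' z, P y z * f z)
      = (if y ∈ A then π y * hser y else 0) := by
    intro y
    rw [hPf y]
    rcases hfcases y with ⟨hyA, hfy⟩ | ⟨hyB, hfy⟩ | ⟨hyS, hfy⟩
    · rw [if_pos hyA, hfy]
      have h2 : (1:ℝ) - gser y = hser y := by linarith [hgh1 y]
      rw [h2]; ring
    · have hyA : y ∉ A := fun h => Set.disjoint_left.mp hdisj h hyB
      rw [if_neg hyA, hfy]; ring
    · have hyA : y ∉ A := fun h => ((hS y).mp hyS).1 h
      rw [if_neg hyA, hfy]; ring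
  have hTval : ∑' y, π y * f y * (f y - ∑' z, P y z * f z)
      = ∑' y, (if y ∈ A then π y * hser y else 0) := tsum_congr htval
  have hchain : lam * πA ≤ ∑' y, (if y ∈ A then π y * hser y else 0) := by
    have hgap2 := hgap f hsummf2
    rw [hTval] at hgap2
    have h2 : lam * πA ≤ lam * ∑' y, π y * f y ^ 2 :=
      mul_le_mul_of_nonneg_left hften (le_of_lt hlam)
    linarith
  have hTsumm : Summable (fun y => if y ∈ A then π y * hser y else 0) := by
    refine Summable.of_nonneg_of_le (fun y => ?_) (fun y => ?_) hAfin
    · split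
      · exact mul_nonneg (le_of_lt (hπpos y)) (hhnn y)
      · exact le_refl 0
    · split
      · calc π y * hser y ≤ π y * 1 :=
            mul_le_mul_of_nonneg_left (hhle1 y) (le_of_lt (hπpos y))
          _ = π y := mul_one _
      · exact le_refl 0
  set E : Set (ℕ → V) := {ω | ∃ t, 0 < t ∧ ω t ∈ B ∧ ∀ s, 0 < s → s < t → ω s ∉ A ∪ B} with hEdef
  have hkey : ∀ x, ENNReal.ofReal (hser x) ≤ μ x E := by
    intro x
    have hb : ∀ n, 1 ≤ μ x E + ENNReal.ofReal (Phi P S rA n x) := by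
      intro n
      exact mu_lb P h0 A B S hS rA hrAnn hsum x (μ x) (hμ.1 x).measure_univ (hμ.2 x) n
    have hPhiTend : Tendsto (fun n => Phi P S rA n x) atTop (nhds (gser x)) := by
      have ht1 : Tendsto (fun n => ∑ i ∈ Finset.range n, (Qop P S)^[i] rA x) atTop
          (nhds (gser x)) := (hsumg x).hasSum.tendsto_sum_nat
      have ht2 := ht1.add (hq0 x)
      simpa [Phi] using ht2
    have ht2 : Tendsto (fun n => μ x E + ENNReal.ofReal (Phi P S rA n x)) atTop
        (nhds (μ x E + ENNReal.ofReal (gser x))) :=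
      Tendsto.const_add _ ((ENNReal.continuous_ofReal.tendsto _).comp hPhiTend)
    have hlim : 1 ≤ μ x E + ENNReal.ofReal (gser x) := ge_of_tendsto' ht2 hb
    have h2 : ENNReal.ofReal (hser x) = 1 - ENNReal.ofReal (gser x) := by
      have h3 : hser x = 1 - gser x := by linarith [hgh1 x]
      rw [h3, ENNReal.ofReal_sub _ (hgnn x), ENNReal.ofReal_one]
    rw [h2]
    exact tsub_le_iff_right.mpr hlim
  have hnum : ENNReal.ofReal (∑' y, (if y ∈ A then π y * hser y else 0))
      ≤ ∑' x : V, (if x ∈ A then ENNReal.ofReal (π x) else 0) * μ x E := by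
    have hnn : ∀ y, 0 ≤ (if y ∈ A then π y * hser y else 0) := by
      intro y
      split
      · exact mul_nonneg (le_of_lt (hπpos y)) (hhnn y)
      · exact le_refl 0
    rw [ENNReal.ofReal_tsum_of_nonneg hnn hTsumm]
    refine ENNReal.tsum_le_tsum fun x => ?_
    by_cases hxA : x ∈ A
    · rw [if_pos hxA, if_pos hxA, ENNReal.ofReal_mul (le_of_lt (hπpos x))]
      exact mul_le_mul_right (hkey x) _
    · simp [hxA]
  rw [ENNReal.le_div_iff_mul_le
    (Or.inl (ne_of_gt (ENNReal.ofReal_pos.mpr hπApos))) (Or.inl ENNReal.ofReal_ne_top)]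
  calc ENNReal.ofReal lam * ENNReal.ofReal πA = ENNReal.ofReal (lam * πA) :=
        (ENNReal.ofReal_mul (le_of_lt hlam)).symm
    _ ≤ ENNReal.ofReal (∑' y, (if y ∈ A then π y * hser y else 0)) :=
        ENNReal.ofReal_le_ofReal hchain
    _ ≤ _ := hnum
end

section
/- Let (G_n) be finite graphs with |G_n| = n and maximum degree at most d, converging weakly (in the Benjamini–Schramm sense) to a rooted infinite graph (G,ρ). If p < p_c(G), then for every α > 0, the probability that Bernoulli(p) bond percolation on G_n contains a connected component of size at least αn tends to 0 as n → ∞. -/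
open MeasureTheory Filter

/-- An edge `s(a,b)` is open in the configuration `ω` and present in `G`. -/
def SimpleGraph.OpenAdj {V : Type*} (G : SimpleGraph V) (ω : Sym2 V → Bool) (a b : V) : Prop :=
  G.Adj a b ∧ ω s(a, b) = true

/-- `a` and `b` are joined by a path of open edges of `G`. -/
def SimpleGraph.OpenConn {V : Type*} (G : SimpleGraph V) (ω : Sym2 V → Bool) (a b : V) : Prop :=
  Relation.ReflTransGen (G.OpenAdj ω) a b

/-- The configuration `ω` has an infinite open cluster in `G`. -/
def SimpleGraph.HasInfiniteCluster {V : Type*} (G : SimpleGraph V) (ω : Sym2 V → Bool) : Prop :=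
  ∃ v, {w | G.OpenConn ω v w}.Infinite

/-- `μ` is the law of i.i.d. Bernoulli(`p`) random variables indexed by `E`. -/
def IsBernoulliConfig {E : Type*} (p : ℝ) (μ : Measure (E → Bool)) : Prop :=
  IsProbabilityMeasure μ ∧
    ∀ (s : Finset E) (f : E → Bool),
      μ {ω | ∀ e ∈ s, ω e = f e} = ∏ e ∈ s, ENNReal.ofReal (if f e then p else 1 - p)

/-- The critical probability of Bernoulli bond percolation on `G`, defined relative to a
family `μ p` of Bernoulli(`p`) percolation measures. -/
noncomputable def percThreshold {V : Type*} (G : SimpleGraph V)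
    (μ : ℝ → Measure (Sym2 V → Bool)) : ℝ :=
  sInf {p | p ∈ Set.Icc (0 : ℝ) 1 ∧ 0 < μ p {ω | G.HasInfiniteCluster ω}}

/-- The balls of radius `R` around `u` in `G` and around `ρ` in `H` are isomorphic as rooted
graphs. -/
def BallIso {V W : Type*} (G : SimpleGraph V) (u : V) (H : SimpleGraph W) (ρ : W)
    (R : ℕ) : Prop :=
  ∃ φ : (G.induce {w | G.dist u w ≤ R}) ≃g (H.induce {w | H.dist ρ w ≤ R}),
    ((φ ⟨u, by simp [Set.mem_setOf_eq, SimpleGraph.dist_self]⟩ :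
        {w | H.dist ρ w ≤ R}) : W) = ρ

/-- The Cheeger constant of the finite graph `G` is at least `h`: every set `A` of at most
half the vertices has at least `h |A|` edges to its complement. -/
def CheegerLB {V : Type*} [Fintype V] (G : SimpleGraph V) (h : ℝ) : Prop :=
  ∀ A : Set V, A.Nonempty → 2 * A.ncard ≤ Fintype.card V →
    h * A.ncard ≤ ({e | e ∈ G.edgeSet ∧ ∃ a ∈ A, ∃ b ∈ Aᶜ, e = s(a, b)}.ncard : ℝ)


namespace BSaux


open SimpleGraph

variable {V : Type*}

/-- vertices reachable from `v` by an open path of length at most `m`. -/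
def reachN (H : SimpleGraph V) (ω : Sym2 V → Bool) (v : V) : ℕ → Set V
  | 0 => {v}
  | m+1 => reachN H ω v m ∪ {w | ∃ u ∈ reachN H ω v m, H.OpenAdj ω u w}

/-- combinatorial ball of radius `m` around `v`. -/
def ballSet (H : SimpleGraph V) (v : V) : ℕ → Set V
  | 0 => {v}
  | m+1 => ballSet H v m ∪ ⋃ u ∈ ballSet H v m, H.neighborSet u

variable {H : SimpleGraph V} {ω ω' : Sym2 V → Bool} {v : V}

lemma reachN_succ_subset (m : ℕ) : reachN H ω v m ⊆ reachN H ω v (m+1) :=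
  Set.subset_union_left

lemma reachN_mono {m m' : ℕ} (h : m ≤ m') : reachN H ω v m ⊆ reachN H ω v m' := by
  induction h with
  | refl => rfl
  | step _ ih => exact ih.trans (reachN_succ_subset _)

lemma ballSet_succ_subset (m : ℕ) : ballSet H v m ⊆ ballSet H v (m+1) :=
  Set.subset_union_left

lemma ballSet_mono {m m' : ℕ} (h : m ≤ m') : ballSet H v m ⊆ ballSet H v m' := by
  induction h with
  | refl => rfl
  | step _ ih => exact ih.trans (ballSet_succ_subset _)

lemma mem_reachN_self (m : ℕ) : v ∈ reachN H ω v m :=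
  reachN_mono (Nat.zero_le m) rfl

lemma reachN_subset_ballSet (m : ℕ) : reachN H ω v m ⊆ ballSet H v m := by
  induction m with
  | zero => exact le_refl _
  | succ m ih =>
    rintro w (hw | ⟨u, hu, hadj, -⟩)
    · exact Set.subset_union_left (ih hw)
    · exact Set.subset_union_right (Set.mem_biUnion (ih hu) hadj)

lemma ballSet_finite (hfin : ∀ u, (H.neighborSet u).Finite) (m : ℕ) :
    (ballSet H v m).Finite := by
  induction m with
  | zero => exact Set.finite_singleton v
  | succ m ih => exact ih.union (Set.Finite.biUnion ih fun u _ => hfin u)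

lemma reachN_finite (hfin : ∀ u, (H.neighborSet u).Finite) (m : ℕ) :
    (reachN H ω v m).Finite :=
  (ballSet_finite hfin m).subset (reachN_subset_ballSet m)

lemma openConn_iff_exists_reachN {w : V} :
    H.OpenConn ω v w ↔ ∃ m, w ∈ reachN H ω v m := by
  constructor
  · intro h
    induction h with
    | refl => exact ⟨0, rfl⟩
    | tail _ hadj ih =>
      obtain ⟨m, hm⟩ := ih
      exact ⟨m + 1, Or.inr ⟨_, hm, hadj⟩⟩
  · rintro ⟨m, hm⟩
    induction m generalizing w with
    | zero => cases hm; exact Relation.ReflTransGen.refl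
    | succ m ih =>
      rcases hm with hm | ⟨u, hu, hadj⟩
      · exact ih hm
      · exact (ih hu).tail hadj

lemma reachN_subset_cluster (m : ℕ) : reachN H ω v m ⊆ {w | H.OpenConn ω v w} :=
  fun w hw => openConn_iff_exists_reachN.2 ⟨m, hw⟩

lemma cluster_eq_iUnion : {w | H.OpenConn ω v w} = ⋃ m, reachN H ω v m := by
  ext w
  simp [openConn_iff_exists_reachN, Set.mem_iUnion]

/-- escape lemma: any point of the cluster is either already reached, or there is a
boundary open edge. -/
lemma escape {w : V} (h : H.OpenConn ω v w) (m : ℕ) :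
    w ∈ reachN H ω v m ∨ ∃ u u', u ∈ reachN H ω v m ∧ H.OpenAdj ω u u' ∧
      u' ∉ reachN H ω v m := by
  induction h with
  | refl => exact Or.inl (mem_reachN_self m)
  | tail _ hadj ih =>
    rename_i b c _
    rcases ih with hb | hex
    · by_cases hc : c ∈ reachN H ω v m
      · exact Or.inl hc
      · exact Or.inr ⟨b, c, hb, hadj, hc⟩
    · exact Or.inr hex

/-- growth lemma -/
lemma growth (hfin : ∀ u, (H.neighborSet u).Finite) (m : ℕ) :
    min (m+1) ({w | H.OpenConn ω v w}.ncard) ≤ (reachN H ω v m).ncard := by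
  induction m with
  | zero =>
    have : (reachN H ω v 0).ncard = 1 := by simp [reachN]
    omega
  | succ m ih =>
    by_cases hC : {w | H.OpenConn ω v w} ⊆ reachN H ω v m
    · have h1 : reachN H ω v m = {w | H.OpenConn ω v w} :=
        Set.Subset.antisymm (reachN_subset_cluster m) hC
      have h2 : reachN H ω v (m+1) = {w | H.OpenConn ω v w} :=
        Set.Subset.antisymm (reachN_subset_cluster (m+1))
          (hC.trans (reachN_succ_subset m))
      rw [h2]
      omega
    · obtain ⟨w, hw, hwm⟩ := Set.not_subset.mp hC
      obtain hmem | ⟨u, u', hu, hadj, hu'⟩ := escape hw m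
      · exact absurd hmem hwm
      · have hss : reachN H ω v m ⊂ reachN H ω v (m+1) := by
          refine ⟨reachN_succ_subset m, fun hsub => hu' (hsub (Or.inr ⟨u, hu, hadj⟩))⟩
        have hlt : (reachN H ω v m).ncard < (reachN H ω v (m+1)).ncard :=
          Set.ncard_lt_ncard hss (reachN_finite hfin (m+1))
        omega

lemma reachN_succ (m : ℕ) :
    reachN H ω v (m+1) = reachN H ω v m ∪ {w | ∃ u ∈ reachN H ω v m, H.OpenAdj ω u w} := rfl

/-- stabilization propagates -/
lemma stab_propagate {m : ℕ} (h : reachN H ω v (m+1) = reachN H ω v m) {k : ℕ} (hk : m ≤ k) :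
    reachN H ω v k = reachN H ω v m := by
  induction k, hk using Nat.le_induction with
  | base => rfl
  | succ k hk ih => rw [reachN_succ, ih, ← reachN_succ, h]

lemma cluster_finite_iff (hfin : ∀ u, (H.neighborSet u).Finite) :
    {w | H.OpenConn ω v w}.Finite ↔ ∃ m, reachN H ω v (m+1) = reachN H ω v m := by
  constructor
  · intro hC
    set c := {w | H.OpenConn ω v w}.ncard with hc
    have hvC : v ∈ {w | H.OpenConn ω v w} := Relation.ReflTransGen.refl
    have hcpos : 1 ≤ c := (Set.ncard_pos hC).2 ⟨v, hvC⟩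
    refine ⟨c, ?_⟩
    have h1 : reachN H ω v c = {w | H.OpenConn ω v w} := by
      apply Set.eq_of_subset_of_ncard_le (reachN_subset_cluster c) _ hC
      have := growth (ω := ω) (v := v) hfin c
      omega
    have h2 : reachN H ω v (c+1) = {w | H.OpenConn ω v w} := by
      apply Set.eq_of_subset_of_ncard_le (reachN_subset_cluster (c+1)) _ hC
      have := growth (ω := ω) (v := v) hfin (c+1)
      omega
    rw [h1, h2]
  · rintro ⟨m, hm⟩
    have : {w | H.OpenConn ω v w} = reachN H ω v m := by
      rw [cluster_eq_iUnion]
      apply Set.Subset.antisymm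
      · apply Set.iUnion_subset
        intro k
        rcases le_total k m with h | h
        · exact reachN_mono h
        · rw [stab_propagate hm h]
      · exact Set.subset_iUnion _ m
    rw [this]
    exact reachN_finite hfin m



lemma mem_ballSet_self (m : ℕ) : v ∈ ballSet H v m :=
  ballSet_mono (Nat.zero_le m) rfl

lemma adj_mem_ballSet_succ {m : ℕ} {a b : V} (ha : a ∈ ballSet H v m) (hab : H.Adj a b) :
    b ∈ ballSet H v (m+1) :=
  Set.subset_union_right (Set.mem_biUnion ha hab)

lemma exists_walk_of_mem_ballSet {m : ℕ} {w : V} (hw : w ∈ ballSet H v m) :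
    ∃ q : H.Walk v w, q.length ≤ m := by
  induction m generalizing w with
  | zero => cases hw; exact ⟨SimpleGraph.Walk.nil, by simp⟩
  | succ m ih =>
    rcases hw with hw | hw
    · obtain ⟨q, hq⟩ := ih hw
      exact ⟨q, hq.trans (Nat.le_succ m)⟩
    · simp only [Set.mem_iUnion] at hw
      obtain ⟨u, hu, hadj⟩ := hw
      obtain ⟨q, hq⟩ := ih hu
      exact ⟨q.concat (show H.Adj u w from hadj), by rw [SimpleGraph.Walk.length_concat]; omega⟩

/-- points of the combinatorial ball are at distance at most `m`. -/
lemma dist_le_of_mem_ballSet {m : ℕ} {w : V} (hw : w ∈ ballSet H v m) :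
    H.dist v w ≤ m := by
  obtain ⟨q, hq⟩ := exists_walk_of_mem_ballSet hw
  exact (SimpleGraph.dist_le q).trans hq

/-- determinism: `reachN` only depends on the configuration within the ball. -/
lemma reachN_subset_of_agree {K : ℕ}
    (hagree : ∀ a ∈ ballSet H v K, ∀ b ∈ ballSet H v K, ω s(a, b) = ω' s(a, b))
    {m : ℕ} (hm : m ≤ K) : reachN H ω v m ⊆ reachN H ω' v m := by
  induction m with
  | zero => exact le_refl _
  | succ m ih =>
    rintro w (hw | ⟨u, hu, hadj, hopen⟩)
    · exact Set.subset_union_left (ih (le_of_lt hm) hw)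
    · have hu' := ih (by omega) hu
      have hub : u ∈ ballSet H v K := ballSet_mono (by omega) (reachN_subset_ballSet m hu)
      have hwb : w ∈ ballSet H v K :=
        ballSet_mono hm (adj_mem_ballSet_succ (reachN_subset_ballSet m hu) hadj)
      refine Set.subset_union_right ⟨u, hu', hadj, ?_⟩
      rw [← hagree u hub w hwb]; exact hopen

lemma reachN_eq_of_agree {K : ℕ}
    (hagree : ∀ a ∈ ballSet H v K, ∀ b ∈ ballSet H v K, ω s(a, b) = ω' s(a, b))
    {m : ℕ} (hm : m ≤ K) : reachN H ω v m = reachN H ω' v m :=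
  Set.Subset.antisymm (reachN_subset_of_agree hagree hm)
    (reachN_subset_of_agree (fun a ha b hb => (hagree a ha b hb).symm) hm)

/-- comparison with induced subgraph. -/
lemma reachN_induce_eq {U : Set V} {K : ℕ} (hb : ballSet H v K ⊆ U) (hv : v ∈ U)
    {m : ℕ} (hm : m ≤ K) :
    Subtype.val '' reachN (H.induce U) (fun e => ω (Sym2.map Subtype.val e)) ⟨v, hv⟩ m
      = reachN H ω v m := by
  induction m with
  | zero => simp [reachN]
  | succ m ih =>
    apply Set.Subset.antisymm
    · rintro w ⟨w', (hw' | ⟨u', hu', hadj, hopen⟩), rfl⟩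
      · exact Set.subset_union_left (ih (by omega) ▸ Set.mem_image_of_mem _ hw')
      · refine Set.subset_union_right ⟨u', ?_, ?_, ?_⟩
        · rw [← ih (by omega)]; exact Set.mem_image_of_mem _ hu'
        · exact hadj
        · simpa using hopen
    · rintro w (hw | ⟨u, hu, hadj, hopen⟩)
      · rw [← ih (by omega)] at hw
        obtain ⟨w', hw', rfl⟩ := hw
        exact Set.mem_image_of_mem _ (Set.subset_union_left hw')
      · have huB : u ∈ ballSet H v m := reachN_subset_ballSet m hu
        have hwU : w ∈ U := hb (ballSet_mono hm (adj_mem_ballSet_succ huB hadj))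
        have huU : u ∈ U := hb (ballSet_mono (le_trans (by omega) hm) huB)
        rw [← ih (by omega)] at hu
        obtain ⟨u', hu', hval⟩ := hu
        refine ⟨⟨w, hwU⟩, Or.inr ⟨u', hu', ?_, ?_⟩, rfl⟩
        · show (H.induce U).Adj u' ⟨w, hwU⟩
          rw [show ((H.induce U).Adj u' ⟨w, hwU⟩) ↔ H.Adj ↑u' w from SimpleGraph.comap_adj]
          simpa [hval] using hadj
        · show ω _ = true
          simpa [hval] using hopen


section Iso
variable {V₁ V₂ : Type*} {H₁ : SimpleGraph V₁} {H₂ : SimpleGraph V₂}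

lemma ballSet_iso_subset (ψ : H₁ ≃g H₂) (v : V₁) (m : ℕ) :
    ψ '' ballSet H₁ v m ⊆ ballSet H₂ (ψ v) m := by
  induction m with
  | zero => rintro _ ⟨w, hw, rfl⟩; cases hw; exact rfl
  | succ m ih =>
    rintro _ ⟨w, (hw | hw), rfl⟩
    · exact Set.subset_union_left (ih (Set.mem_image_of_mem _ hw))
    · simp only [Set.mem_iUnion, SimpleGraph.mem_neighborSet] at hw
      obtain ⟨u, hu, hadj⟩ := hw
      exact Set.subset_union_right <| Set.mem_biUnion (ih (Set.mem_image_of_mem _ hu))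
        (ψ.map_adj_iff.2 hadj)

lemma ballSet_iso (ψ : H₁ ≃g H₂) (v : V₁) (m : ℕ) :
    ballSet H₂ (ψ v) m = ψ '' ballSet H₁ v m := by
  apply Set.Subset.antisymm _ (ballSet_iso_subset ψ v m)
  intro w hw
  have h1 : ψ.symm w ∈ ballSet H₁ v m := by
    have := ballSet_iso_subset ψ.symm (ψ v) m (Set.mem_image_of_mem _ hw)
    rwa [show ψ.symm (ψ v) = v from ψ.symm_apply_apply v] at this
  exact ⟨ψ.symm w, h1, ψ.apply_symm_apply w⟩

lemma reachN_iso_subset (ψ : H₁ ≃g H₂) (v : V₁) {g₁ : Sym2 V₁ → Bool} {g₂ : Sym2 V₂ → Bool}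
    {M : ℕ}
    (hrel : ∀ a b, H₁.Adj a b → a ∈ ballSet H₁ v M → b ∈ ballSet H₁ v M →
      g₂ s(ψ a, ψ b) = g₁ s(a, b))
    {m : ℕ} (hm : m ≤ M) :
    ψ '' reachN H₁ g₁ v m ⊆ reachN H₂ g₂ (ψ v) m := by
  induction m with
  | zero => rintro _ ⟨w, hw, rfl⟩; cases hw; exact rfl
  | succ m ih =>
    rintro _ ⟨w, (hw | ⟨u, hu, hadj, hopen⟩), rfl⟩
    · exact Set.subset_union_left (ih (by omega) (Set.mem_image_of_mem _ hw))
    · refine Set.subset_union_right ⟨ψ u, ih (by omega) (Set.mem_image_of_mem _ hu), ?_, ?_⟩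
      · exact ψ.map_adj_iff.2 hadj
      · have hub : u ∈ ballSet H₁ v M :=
          ballSet_mono (by omega) (reachN_subset_ballSet m hu)
        have hwb : w ∈ ballSet H₁ v M :=
          ballSet_mono hm (adj_mem_ballSet_succ (reachN_subset_ballSet m hu) hadj)
        rw [hrel u w hadj hub hwb]; exact hopen

lemma reachN_iso (ψ : H₁ ≃g H₂) (v : V₁) {g₁ : Sym2 V₁ → Bool} {g₂ : Sym2 V₂ → Bool}
    {M : ℕ}
    (hrel : ∀ a b, H₁.Adj a b → a ∈ ballSet H₁ v M → b ∈ ballSet H₁ v M →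
      g₂ s(ψ a, ψ b) = g₁ s(a, b))
    {m : ℕ} (hm : m ≤ M) :
    reachN H₂ g₂ (ψ v) m = ψ '' reachN H₁ g₁ v m := by
  apply Set.Subset.antisymm _ (reachN_iso_subset ψ v hrel hm)
  have hrel' : ∀ a b, H₂.Adj a b → a ∈ ballSet H₂ (ψ v) M → b ∈ ballSet H₂ (ψ v) M →
      g₁ s(ψ.symm a, ψ.symm b) = g₂ s(a, b) := by
    intro a b hadj ha hb
    have h1 : H₁.Adj (ψ.symm a) (ψ.symm b) := ψ.symm.map_adj_iff.2 hadj
    have ha1 : ψ.symm a ∈ ballSet H₁ v M := by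
      rw [ballSet_iso ψ v M] at ha
      obtain ⟨a₁, ha₁, rfl⟩ := ha
      rwa [ψ.symm_apply_apply]
    have hb1 : ψ.symm b ∈ ballSet H₁ v M := by
      rw [ballSet_iso ψ v M] at hb
      obtain ⟨b₁, hb₁, rfl⟩ := hb
      rwa [ψ.symm_apply_apply]
    rw [← hrel _ _ h1 ha1 hb1, ψ.apply_symm_apply, ψ.apply_symm_apply]
  intro w hw
  have h2 := reachN_iso_subset ψ.symm (ψ v) hrel' hm (Set.mem_image_of_mem _ hw)
  rw [ψ.symm_apply_apply] at h2
  exact ⟨ψ.symm w, h2, ψ.apply_symm_apply w⟩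

end Iso

open Classical in
noncomputable def extCfg {E : Type*} (S : Finset E) (g : {x // x ∈ S} → Bool) : E → Bool :=
  fun e => if h : e ∈ S then g ⟨e, h⟩ else false

lemma extCfg_mem {E : Type*} {S : Finset E} (g : {x // x ∈ S} → Bool) {e : E} (h : e ∈ S) :
    extCfg S g e = g ⟨e, h⟩ := dif_pos h

/-- the cylinder on `S` determined by `g`. -/
def cyl {E : Type*} (S : Finset E) (f : E → Bool) : Set (E → Bool) :=
  {ω | ∀ e ∈ S, ω e = f e}

lemma measurableSet_cyl {E : Type*} (S : Finset E) (f : E → Bool) :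
    MeasurableSet (cyl S f) := by
  have : cyl S f = ⋂ e ∈ S, (fun ω : E → Bool => ω e) ⁻¹' {f e} := by
    ext ω; simp [cyl]
  rw [this]
  exact MeasurableSet.biInter S.countable_toSet
    (fun e _ => measurable_pi_apply e (MeasurableSet.singleton (f e)))

open Classical in
/-- a set determined by coordinates in `S` is the finite disjoint union of cylinders. -/
lemma determined_eq_biUnion {E : Type*} (S : Finset E) (T : Set (E → Bool))
    (hdet : ∀ ω ω', (∀ e ∈ S, ω e = ω' e) → ω ∈ T → ω' ∈ T) :
    T = ⋃ g ∈ Finset.univ.filter (fun g : {x // x ∈ S} → Bool => extCfg S g ∈ T),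
      cyl S (extCfg S g) := by
  ext ω
  simp only [Set.mem_iUnion, Finset.mem_filter, Finset.mem_univ, true_and]
  constructor
  · intro hω
    refine ⟨fun e => ω e.1, ?_, ?_⟩
    · exact hdet ω _ (fun e he => by simp [extCfg, he]) hω
    · intro e he; simp [extCfg, he]
  · rintro ⟨g, hg, hcyl⟩
    exact hdet (extCfg S g) ω (fun e he => (hcyl e he).symm) hg

open Classical in
lemma measurableSet_determined {E : Type*} (S : Finset E) (T : Set (E → Bool))
    (hdet : ∀ ω ω', (∀ e ∈ S, ω e = ω' e) → ω ∈ T → ω' ∈ T) :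
    MeasurableSet T := by
  rw [determined_eq_biUnion S T hdet]
  exact MeasurableSet.biUnion (Finset.countable_toSet _)
    (fun g _ => measurableSet_cyl S (extCfg S g))

open Classical in
/-- measure of a determined set, as a sum over configurations on `S`. -/
lemma measure_determined {E : Type*} {p : ℝ} {μ : Measure (E → Bool)}
    (hμ : IsBernoulliConfig p μ) (S : Finset E) (T : Set (E → Bool))
    (hdet : ∀ ω ω', (∀ e ∈ S, ω e = ω' e) → ω ∈ T → ω' ∈ T) :
    μ T = ∑ g : {x // x ∈ S} → Bool,
      (if extCfg S g ∈ T then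
        ∏ e : {x // x ∈ S}, ENNReal.ofReal (if g e then p else 1 - p) else 0) := by
  have hd : Set.PairwiseDisjoint
      ↑(Finset.univ.filter (fun g : {x // x ∈ S} → Bool => extCfg S g ∈ T))
      (fun g => cyl S (extCfg S g)) := by
    intro g hg g' hg' hne
    simp only [Function.onFun, Set.disjoint_left]
    intro ω hω hω'
    apply hne
    ext e
    have h1 := hω e.1 e.2
    have h2 := hω' e.1 e.2
    rw [extCfg_mem _ e.2] at h1
    rw [extCfg_mem _ e.2] at h2
    rw [← h1, ← h2]
  conv_lhs => rw [determined_eq_biUnion S T hdet]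
  rw [measure_biUnion_finset hd (fun g _ => measurableSet_cyl S (extCfg S g))]
  rw [Finset.sum_filter]
  apply Finset.sum_congr rfl
  intro g _
  by_cases hgT : extCfg S g ∈ T
  · rw [if_pos hgT, if_pos hgT]
    rw [show cyl S (extCfg S g) = {ω | ∀ e ∈ S, ω e = extCfg S g e} from rfl, hμ.2 S _]
    rw [← Finset.prod_attach S (fun e => ENNReal.ofReal (if extCfg S g e then p else 1 - p))]
    apply Finset.prod_congr rfl
    intro e _
    rw [extCfg_mem g e.2]
  · rw [if_neg hgT, if_neg hgT]

open Classical in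
/-- transport: two determined events over matching Bernoulli measures with a bijection of
coordinates have equal measure. -/
lemma measure_determined_eq {E₁ E₂ : Type*} {p : ℝ}
    {μ₁ : Measure (E₁ → Bool)} {μ₂ : Measure (E₂ → Bool)}
    (h₁ : IsBernoulliConfig p μ₁) (h₂ : IsBernoulliConfig p μ₂)
    (S₁ : Finset E₁) (S₂ : Finset E₂) (σ : {x // x ∈ S₁} ≃ {x // x ∈ S₂})
    (T₁ : Set (E₁ → Bool)) (T₂ : Set (E₂ → Bool))
    (hdet₁' : ∀ ω ω', (∀ e ∈ S₁, ω e = ω' e) → ω ∈ T₁ → ω' ∈ T₁)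
    (hdet₂ : ∀ ω ω', (∀ e ∈ S₂, ω e = ω' e) → ω ∈ T₂ → ω' ∈ T₂)
    (hcorr : ∀ g : {x // x ∈ S₂} → Bool, extCfg S₁ (g ∘ σ) ∈ T₁ ↔ extCfg S₂ g ∈ T₂) :
    μ₁ T₁ = μ₂ T₂ := by
  rw [measure_determined h₁ S₁ T₁ hdet₁', measure_determined h₂ S₂ T₂ hdet₂]
  apply Fintype.sum_equiv (Equiv.arrowCongr σ (Equiv.refl Bool))
  intro g
  have hcomp : (Equiv.arrowCongr σ (Equiv.refl Bool)) g ∘ σ = g := by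
    ext e; simp [Equiv.arrowCongr]
  rw [← hcorr ((Equiv.arrowCongr σ (Equiv.refl Bool)) g), hcomp]
  congr 1
  rw [← Equiv.prod_comp σ (fun e => ENNReal.ofReal
    (if (Equiv.arrowCongr σ (Equiv.refl Bool)) g e then p else 1 - p))]
  apply Finset.prod_congr rfl
  intro e _
  congr 2
  simp [Equiv.arrowCongr]



lemma measurableSet_all {E : Type*} [Fintype E] (s : Set (E → Bool)) : MeasurableSet s := by
  have : s = ⋃ f ∈ s, ⋂ e, (fun ω : E → Bool => ω e) ⁻¹' {f e} := by
    ext ω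
    simp only [Set.mem_iUnion, Set.mem_iInter, Set.mem_preimage, Set.mem_singleton_iff]
    constructor
    · intro h; exact ⟨ω, h, fun e => rfl⟩
    · rintro ⟨f, hf, he⟩
      have : ω = f := funext he
      rwa [this]
  rw [this]
  exact MeasurableSet.biUnion (Set.to_countable _)
    (fun f _ => MeasurableSet.iInter
      (fun e => measurable_pi_apply e (MeasurableSet.singleton (f e))))

open Classical in
lemma markov {E : Type*} [Fintype E] {μ : Measure (E → Bool)} {ι : Type*} [Fintype ι]
    (T : Set (E → Bool)) (Tv : ι → Set (E → Bool)) (m : ℕ)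
    (hm : ∀ ω ∈ T, m ≤ (Finset.univ.filter (fun v => ω ∈ Tv v)).card) :
    (m : ENNReal) * μ T ≤ ∑ v : ι, μ (Tv v) := by
  have h1 : ∀ v : ι, μ (Tv v) = ∫⁻ ω, (Tv v).indicator (fun _ => (1 : ENNReal)) ω ∂μ := by
    intro v
    rw [lintegral_indicator_const (measurableSet_all (Tv v)), one_mul]
  have h2 : (m : ENNReal) * μ T
      = ∫⁻ ω, T.indicator (fun _ => (m : ENNReal)) ω ∂μ := by
    rw [lintegral_indicator_const (measurableSet_all T)]
  rw [h2]
  calc ∫⁻ ω, T.indicator (fun _ => (m : ENNReal)) ω ∂μ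
      ≤ ∫⁻ ω, ∑ v : ι, (Tv v).indicator (fun _ => (1 : ENNReal)) ω ∂μ := by
        apply lintegral_mono
        intro ω
        by_cases hω : ω ∈ T
        · rw [Set.indicator_of_mem hω]
          have : ∑ v : ι, (Tv v).indicator (fun _ => (1 : ENNReal)) ω
              = ((Finset.univ.filter (fun v => ω ∈ Tv v)).card : ENNReal) := by
            rw [← Finset.sum_boole]
            apply Finset.sum_congr rfl
            intro v _
            by_cases h : ω ∈ Tv v <;> simp [h]
          show (m : ENNReal) ≤ ∑ v : ι, (Tv v).indicator (fun _ => (1 : ENNReal)) ω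
          rw [this]
          exact_mod_cast Nat.cast_le.2 (hm ω hω)
        · show T.indicator (fun _ => (m : ENNReal)) ω ≤ _
          rw [Set.indicator_of_notMem hω]
          exact zero_le
    _ = ∑ v : ι, μ (Tv v) := by
        rw [lintegral_finset_sum]
        · exact (Finset.sum_congr rfl (fun v _ => (h1 v).symm))
        · intro v _
          exact Measurable.indicator measurable_const (measurableSet_all (Tv v))


section Events
open SimpleGraph
variable {V : Type*}

open Classical in
/-- the finite set of `Sym2`-coordinates supported in the radius-`J` combinatorial ball. -/
noncomputable def pairFinset {H : SimpleGraph V} {v : V} {J : ℕ}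
    (hfin : (ballSet H v J).Finite) : Finset (Sym2 V) :=
  (hfin.toFinset ×ˢ hfin.toFinset).image (fun q => s(q.1, q.2))

lemma mem_pairFinset {H : SimpleGraph V} {v : V} {J : ℕ}
    (hfin : (ballSet H v J).Finite) {a b : V}
    (ha : a ∈ ballSet H v J) (hb : b ∈ ballSet H v J) :
    s(a, b) ∈ pairFinset hfin := by
  classical
  exact Finset.mem_image.2 ⟨(a, b), Finset.mem_product.2
    ⟨hfin.mem_toFinset.2 ha, hfin.mem_toFinset.2 hb⟩, rfl⟩

/-- the event that the cluster of `v` reaches at least `J+1` vertices within `J` steps. -/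
def Ev (H : SimpleGraph V) (v : V) (J : ℕ) : Set (Sym2 V → Bool) :=
  {ω | (J + 1 : ℕ) ≤ (reachN H ω v J).ncard}

lemma Ev_det {H : SimpleGraph V} {v : V} {J : ℕ} (hfin : (ballSet H v J).Finite) :
    ∀ ω ω', (∀ e ∈ pairFinset hfin, ω e = ω' e) → ω ∈ Ev H v J → ω' ∈ Ev H v J := by
  intro ω ω' hagree hω
  have : reachN H ω v J = reachN H ω' v J :=
    reachN_eq_of_agree (fun a ha b hb => hagree _ (mem_pairFinset hfin ha hb)) le_rfl
  simpa [Ev, ← this] using hω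

/-- membership in `Ev` from a large cluster. -/
lemma mem_Ev_of_large_cluster {H : SimpleGraph V} {v : V} {J : ℕ}
    (hfin : ∀ u, (H.neighborSet u).Finite) {ω : Sym2 V → Bool}
    (h : (J + 1 : ℕ) ≤ {w | H.OpenConn ω v w}.ncard) : ω ∈ Ev H v J := by
  have := growth (H := H) (ω := ω) (v := v) hfin J
  simp only [Ev, Set.mem_setOf_eq]
  omega

/-- the induced-subgraph comparison for `ballSet`. -/
lemma ballSet_induce_eq {H : SimpleGraph V} {v : V} {U : Set V} {K : ℕ}
    (hb : ballSet H v K ⊆ U) (hv : v ∈ U) {m : ℕ} (hm : m ≤ K) :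
    Subtype.val '' ballSet (H.induce U) ⟨v, hv⟩ m = ballSet H v m := by
  induction m with
  | zero => simp [ballSet]
  | succ m ih =>
    apply Set.Subset.antisymm
    · rintro w ⟨w', (hw' | hw'), rfl⟩
      · exact Set.subset_union_left (ih (by omega) ▸ Set.mem_image_of_mem _ hw')
      · simp only [Set.mem_iUnion, SimpleGraph.mem_neighborSet] at hw'
        obtain ⟨u', hu', hadj⟩ := hw'
        have h1 : ↑u' ∈ ballSet H v m := by
          rw [← ih (by omega)]; exact Set.mem_image_of_mem _ hu'
        exact Set.subset_union_right (Set.mem_biUnion h1 hadj)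
    · rintro w (hw | hw)
      · rw [← ih (by omega)] at hw
        obtain ⟨w', hw', rfl⟩ := hw
        exact Set.mem_image_of_mem _ (Set.subset_union_left hw')
      · simp only [Set.mem_iUnion, SimpleGraph.mem_neighborSet] at hw
        obtain ⟨u, hu, hadj⟩ := hw
        have hwU : w ∈ U := hb (ballSet_mono hm (adj_mem_ballSet_succ hu hadj))
        have huU : u ∈ U := hb (ballSet_mono (le_trans (by omega) hm) hu)
        rw [← ih (by omega)] at hu
        obtain ⟨u', hu', hval⟩ := hu
        refine ⟨⟨w, hwU⟩, Set.subset_union_right (Set.mem_biUnion hu' ?_), rfl⟩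
        show (H.induce U).Adj u' ⟨w, hwU⟩
        rw [show ((H.induce U).Adj u' ⟨w, hwU⟩) ↔ H.Adj ↑u' w from SimpleGraph.comap_adj]
        rw [hval]; exact hadj

lemma exists_of_mem_pairFinset {H : SimpleGraph V} {v : V} {J : ℕ}
    (hfin : (ballSet H v J).Finite) {e : Sym2 V} (he : e ∈ pairFinset hfin) :
    ∃ a ∈ ballSet H v J, ∃ b ∈ ballSet H v J, e = s(a, b) := by
  classical
  obtain ⟨⟨a, b⟩, hq, rfl⟩ := Finset.mem_image.1 he
  obtain ⟨ha, hb⟩ := Finset.mem_product.1 hq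
  exact ⟨a, hfin.mem_toFinset.1 ha, b, hfin.mem_toFinset.1 hb, rfl⟩

end Events

section KeyEq
open SimpleGraph

set_option maxHeartbeats 1000000 in
lemma key_eq {V₁ W : Type*} [Fintype V₁] {H₁ : SimpleGraph V₁} {v : V₁}
    {G : SimpleGraph W} {ρ : W} (hdegG : ∀ w, (G.neighborSet w).Finite)
    {J : ℕ} (hiso : BallIso H₁ v G ρ (J + 1))
    {p : ℝ} {μ₁ : Measure (Sym2 V₁ → Bool)} (h₁ : IsBernoulliConfig p μ₁)
    {μ₂ : Measure (Sym2 W → Bool)} (h₂ : IsBernoulliConfig p μ₂) :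
    μ₁ (Ev H₁ v J) = μ₂ (Ev G ρ J) := by
  classical
  set D₁ : Set V₁ := {w | H₁.dist v w ≤ (J + 1 : ℕ)} with hD₁def
  set D₂ : Set W := {w | G.dist ρ w ≤ (J + 1 : ℕ)} with hD₂def
  obtain ⟨φ, hroot⟩ := hiso
  have hv₁ : v ∈ D₁ := by simp [hD₁def, SimpleGraph.dist_self]
  have hρ₂ : ρ ∈ D₂ := by simp [hD₂def, SimpleGraph.dist_self]
  set r₁ : D₁ := ⟨v, hv₁⟩ with hr₁def
  set r₂ : D₂ := ⟨ρ, hρ₂⟩ with hr₂def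
  have hφr : φ r₁ = r₂ := Subtype.ext hroot
  have hbD₁ : ballSet H₁ v J ⊆ D₁ :=
    fun w hw => le_trans (dist_le_of_mem_ballSet hw) (by omega)
  have hbD₂ : ballSet G ρ J ⊆ D₂ :=
    fun w hw => le_trans (dist_le_of_mem_ballSet hw) (by omega)
  have hfin₁ : (ballSet H₁ v J).Finite := Set.toFinite _
  have hfin₂ : (ballSet G ρ J).Finite := ballSet_finite hdegG J
  set S₁ := pairFinset hfin₁ with hS₁def
  set S₂ := pairFinset hfin₂ with hS₂def
  have F1 : Subtype.val '' ballSet (H₁.induce D₁) r₁ J = ballSet H₁ v J :=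
    ballSet_induce_eq hbD₁ hv₁ le_rfl
  have F2 : Subtype.val '' ballSet (G.induce D₂) r₂ J = ballSet G ρ J :=
    ballSet_induce_eq hbD₂ hρ₂ le_rfl
  have Fiso : ballSet (G.induce D₂) r₂ J = φ '' ballSet (H₁.induce D₁) r₁ J := by
    rw [← hφr]; exact ballSet_iso φ r₁ J
  set f : V₁ → W := fun a => if h : a ∈ D₁ then ↑(φ ⟨a, h⟩) else ρ with hfdef
  set g' : W → V₁ := fun b => if h : b ∈ D₂ then ↑(φ.symm ⟨b, h⟩) else v with hg'def
  have hf_eq : ∀ a : D₁, f ↑a = ↑(φ a) := fun a => dif_pos a.2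
  have hg_eq : ∀ b : D₂, g' ↑b = ↑(φ.symm b) := fun b => dif_pos b.2
  have hfg : ∀ a : D₁, g' (f ↑a) = ↑a := by
    intro a
    rw [hf_eq a, hg_eq (φ a), φ.symm_apply_apply]
  have hgf : ∀ b : D₂, f (g' ↑b) = ↑b := by
    intro b
    rw [hg_eq b, hf_eq (φ.symm b), φ.apply_symm_apply]
  have hfbs : ∀ a ∈ ballSet H₁ v J, f a ∈ ballSet G ρ J := by
    intro a ha
    rw [← F1] at ha
    obtain ⟨a', ha', rfl⟩ := ha
    rw [hf_eq a', ← F2]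
    exact ⟨φ a', Fiso ▸ Set.mem_image_of_mem _ ha', rfl⟩
  have hgbs : ∀ b ∈ ballSet G ρ J, g' b ∈ ballSet H₁ v J := by
    intro b hb
    rw [← F2] at hb
    obtain ⟨b', hb', rfl⟩ := hb
    rw [hg_eq b']
    rw [Fiso] at hb'
    obtain ⟨a', ha', rfl⟩ := hb'
    rw [φ.symm_apply_apply]
    exact F1 ▸ Set.mem_image_of_mem _ ha'
  set σ : {x // x ∈ S₁} ≃ {x // x ∈ S₂} :=
    { toFun := fun e => ⟨Sym2.map f e.1, by
        obtain ⟨a, ha, b, hb, heq⟩ := exists_of_mem_pairFinset hfin₁ e.2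
        rw [heq, Sym2.map_pair_eq]
        exact mem_pairFinset hfin₂ (hfbs a ha) (hfbs b hb)⟩
      invFun := fun e => ⟨Sym2.map g' e.1, by
        obtain ⟨a, ha, b, hb, heq⟩ := exists_of_mem_pairFinset hfin₂ e.2
        rw [heq, Sym2.map_pair_eq]
        exact mem_pairFinset hfin₁ (hgbs a ha) (hgbs b hb)⟩
      left_inv := by
        intro e
        apply Subtype.ext
        obtain ⟨a, ha, b, hb, heq⟩ := exists_of_mem_pairFinset hfin₁ e.2
        show Sym2.map g' (Sym2.map f e.1) = e.1
        rw [heq, Sym2.map_pair_eq, Sym2.map_pair_eq,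
          show g' (f a) = a from hfg ⟨a, hbD₁ ha⟩,
          show g' (f b) = b from hfg ⟨b, hbD₁ hb⟩]
      right_inv := by
        intro e
        apply Subtype.ext
        obtain ⟨a, ha, b, hb, heq⟩ := exists_of_mem_pairFinset hfin₂ e.2
        show Sym2.map f (Sym2.map g' e.1) = e.1
        rw [heq, Sym2.map_pair_eq, Sym2.map_pair_eq,
          show f (g' a) = a from hgf ⟨a, hbD₂ ha⟩,
          show f (g' b) = b from hgf ⟨b, hbD₂ hb⟩] } with hσdef
  apply measure_determined_eq h₁ h₂ S₁ S₂ σ _ _ (Ev_det hfin₁) (Ev_det hfin₂)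
  intro g
  set ω₁ : Sym2 V₁ → Bool := extCfg S₁ (g ∘ σ) with hω₁def
  set ω₂ : Sym2 W → Bool := extCfg S₂ g with hω₂def
  have hrel : ∀ a b : D₁, (H₁.induce D₁).Adj a b → a ∈ ballSet (H₁.induce D₁) r₁ J →
      b ∈ ballSet (H₁.induce D₁) r₁ J →
      (fun e => ω₂ (Sym2.map Subtype.val e)) s(φ a, φ b)
        = (fun e => ω₁ (Sym2.map Subtype.val e)) s(a, b) := by
    intro a b _ ha hb
    have ha1 : (a : V₁) ∈ ballSet H₁ v J := F1 ▸ Set.mem_image_of_mem _ ha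
    have hb1 : (b : V₁) ∈ ballSet H₁ v J := F1 ▸ Set.mem_image_of_mem _ hb
    have he₁ : s((a : V₁), (b : V₁)) ∈ S₁ := mem_pairFinset hfin₁ ha1 hb1
    have hσval : (σ ⟨s((a : V₁), (b : V₁)), he₁⟩).1 = s((φ a : W), (φ b : W)) := by
      show Sym2.map f s((a : V₁), (b : V₁)) = _
      rw [Sym2.map_pair_eq, hf_eq a, hf_eq b]
    have he₂ : s((φ a : W), (φ b : W)) ∈ S₂ := hσval ▸ (σ ⟨s((a : V₁), (b : V₁)), he₁⟩).2
    show ω₂ (Sym2.map Subtype.val s(φ a, φ b)) = ω₁ (Sym2.map Subtype.val s(a, b))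
    rw [Sym2.map_pair_eq, Sym2.map_pair_eq]
    rw [show ω₂ s((φ a : W), (φ b : W)) = g ⟨_, he₂⟩ from extCfg_mem _ he₂]
    rw [show ω₁ s((a : V₁), (b : V₁)) = (g ∘ σ) ⟨_, he₁⟩ from extCfg_mem _ he₁]
    show g _ = g (σ ⟨_, he₁⟩)
    congr 1
    exact Subtype.ext hσval.symm
  have E1 : reachN H₁ ω₁ v J
      = Subtype.val '' reachN (H₁.induce D₁) (fun e => ω₁ (Sym2.map Subtype.val e)) r₁ J :=
    (reachN_induce_eq hbD₁ hv₁ le_rfl).symm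
  have E2 : reachN (G.induce D₂) (fun e => ω₂ (Sym2.map Subtype.val e)) (φ r₁) J
      = φ '' reachN (H₁.induce D₁) (fun e => ω₁ (Sym2.map Subtype.val e)) r₁ J :=
    reachN_iso φ r₁ hrel le_rfl
  have E3 : reachN G ω₂ ρ J
      = Subtype.val '' reachN (G.induce D₂) (fun e => ω₂ (Sym2.map Subtype.val e)) r₂ J :=
    (reachN_induce_eq hbD₂ hρ₂ le_rfl).symm
  have hc : (reachN H₁ ω₁ v J).ncard = (reachN G ω₂ ρ J).ncard := by
    rw [E1, E3, ← hφr, E2]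
    rw [Set.ncard_image_of_injective _ Subtype.val_injective,
      Set.ncard_image_of_injective _ Subtype.val_injective,
      Set.ncard_image_of_injective _ (RelIso.injective φ)]
  show ω₁ ∈ Ev H₁ v J ↔ ω₂ ∈ Ev G ρ J
  simp only [Ev, Set.mem_setOf_eq, hc]

end KeyEq

section Gside
open SimpleGraph

variable {W : Type*} {G : SimpleGraph W} {ρ : W}

/-- the event that the open cluster of `ρ` is infinite. -/
def InfCl (G : SimpleGraph W) (ρ : W) : Set (Sym2 W → Bool) :=
  {ω | {w | G.OpenConn ω ρ w}.Infinite}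

lemma measurableSet_Ev (hdegG : ∀ w, (G.neighborSet w).Finite) (J : ℕ) :
    MeasurableSet (Ev G ρ J) :=
  measurableSet_determined (pairFinset (ballSet_finite hdegG J)) _ (Ev_det _)

lemma measurableSet_InfCl (hdegG : ∀ w, (G.neighborSet w).Finite) :
    MeasurableSet (InfCl G ρ) := by
  have h : (InfCl G ρ)ᶜ = ⋃ J : ℕ, {ω | reachN G ω ρ (J+1) = reachN G ω ρ J} := by
    ext ω
    simp only [InfCl, Set.mem_compl_iff, Set.mem_setOf_eq, Set.not_infinite, Set.mem_iUnion]
    exact cluster_finite_iff hdegG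
  have h2 : InfCl G ρ = (⋃ J : ℕ, {ω | reachN G ω ρ (J+1) = reachN G ω ρ J})ᶜ := by
    rw [← h, compl_compl]
  rw [h2]
  apply MeasurableSet.compl
  apply MeasurableSet.iUnion
  intro J
  apply measurableSet_determined (pairFinset (ballSet_finite hdegG (J+1)))
  intro ω ω' hagree hω
  have hag : ∀ a ∈ ballSet G ρ (J+1), ∀ b ∈ ballSet G ρ (J+1), ω s(a,b) = ω' s(a,b) :=
    fun a ha b hb => hagree _ (mem_pairFinset _ ha hb)
  have e1 := reachN_eq_of_agree (ω := ω) (ω' := ω') hag le_rfl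
  have e2 := reachN_eq_of_agree (ω := ω) (ω' := ω') hag (Nat.le_succ J)
  show reachN G ω' ρ (J+1) = reachN G ω' ρ J
  rw [← e1, ← e2]
  exact hω

lemma Ev_union_antitone (hdegG : ∀ w, (G.neighborSet w).Finite) :
    Antitone (fun J => Ev G ρ J ∪ InfCl G ρ) := by
  apply antitone_nat_of_succ_le
  intro J
  rintro ω (hω | hI)
  · by_cases hInf : ω ∈ InfCl G ρ
    · exact Or.inr hInf
    · left
      have hCfin : {w | G.OpenConn ω ρ w}.Finite := Set.not_infinite.1 hInf
      have hsub := reachN_subset_cluster (H := G) (ω := ω) (v := ρ) (J+1)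
      have h1 : (J + 2 : ℕ) ≤ {w | G.OpenConn ω ρ w}.ncard :=
        le_trans hω (Set.ncard_le_ncard hsub hCfin)
      exact mem_Ev_of_large_cluster hdegG (by omega)
  · exact Or.inr hI

lemma iInter_Ev_union : (⋂ J : ℕ, (Ev G ρ J ∪ InfCl G ρ)) = InfCl G ρ := by
  apply Set.Subset.antisymm
  · intro ω hω
    by_contra hI
    have hCfin : {w | G.OpenConn ω ρ w}.Finite := Set.not_infinite.1 hI
    set c := {w | G.OpenConn ω ρ w}.ncard with hc
    have := Set.mem_iInter.1 hω c
    rcases this with hEv | hInf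
    · have hsub := reachN_subset_cluster (H := G) (ω := ω) (v := ρ) c
      have : (c + 1 : ℕ) ≤ c := le_trans hEv (Set.ncard_le_ncard hsub hCfin)
      omega
    · exact hI hInf
  · intro ω hI
    exact Set.mem_iInter.2 (fun J => Or.inr hI)

lemma tendsto_measure_Ev (hdegG : ∀ w, (G.neighborSet w).Finite) {p : ℝ}
    {μ₂ : Measure (Sym2 W → Bool)} (h₂ : IsBernoulliConfig p μ₂)
    (hzero : μ₂ {ω | G.HasInfiniteCluster ω} = 0) :
    Tendsto (fun J => μ₂ (Ev G ρ J ∪ InfCl G ρ)) atTop (nhds 0) := by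
  have hI0 : μ₂ (InfCl G ρ) = 0 := by
    apply le_antisymm _ zero_le
    rw [← hzero]
    exact measure_mono (fun ω hω => ⟨ρ, hω⟩)
  have hfin : μ₂ (Ev G ρ 0 ∪ InfCl G ρ) ≠ ⊤ := by
    haveI := h₂.1
    exact measure_ne_top μ₂ _
  have := MeasureTheory.tendsto_measure_iInter_atTop (μ := μ₂)
    (s := fun J => Ev G ρ J ∪ InfCl G ρ)
    (fun J => ((measurableSet_Ev hdegG J).union (measurableSet_InfCl hdegG)).nullMeasurableSet)
    (Ev_union_antitone hdegG) ⟨0, hfin⟩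
  rw [iInter_Ev_union, hI0] at this
  exact this

end Gside

end BSaux

/-- let `G_n` be finite graphs with `|G_n| = n` and maximum degree at most `d`,
converging weakly (Benjamini–Schramm) to a rooted infinite bounded-degree graph `(G, ρ)`.
If `p < p_c(G)`, then for every `α > 0` the probability that Bernoulli(`p`) bond percolation
on `G_n` contains a connected component of size at least `α n` tends to `0`. -/
theorem stmt_11 (V : ℕ → Type*) [∀ n, Fintype (V n)] (Gn : ∀ n, SimpleGraph (V n))
    (hcard : ∀ n, Fintype.card (V n) = n)
    (d : ℕ) (hdegn : ∀ n v, ((Gn n).neighborSet v).ncard ≤ d)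
    {W : Type*} [Infinite W] (G : SimpleGraph W) (ρ : W)
    (hdeg : ∀ w, (G.neighborSet w).Finite ∧ (G.neighborSet w).ncard ≤ d)
    (hconv : ∀ R : ℕ,
      Tendsto (fun n => ({v : V n | BallIso (Gn n) v G ρ R}.ncard : ℝ) / n) atTop (nhds 1))
    (ν : ℝ → Measure (Sym2 W → Bool))
    (hν : ∀ q ∈ Set.Icc (0 : ℝ) 1, IsBernoulliConfig q (ν q))
    (p : ℝ) (hp : p ∈ Set.Icc (0 : ℝ) 1) (hsub : p < percThreshold G ν)
    (μn : ∀ n, Measure (Sym2 (V n) → Bool)) (hμn : ∀ n, IsBernoulliConfig p (μn n)) :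
    ∀ α : ℝ, 0 < α →
      Tendsto
        (fun n => μn n {ω | ∃ v, α * n ≤ ({w | (Gn n).OpenConn ω v w}.ncard : ℝ)})
        atTop (nhds 0) := by
  classical
  intro α hα
  have hνp : IsBernoulliConfig p (ν p) := hν p hp
  have hdegG : ∀ w, (G.neighborSet w).Finite := fun w => (hdeg w).1
  have hzero : ν p {ω | G.HasInfiniteCluster ω} = 0 := by
    by_contra h0
    have hmem : p ∈ {q | q ∈ Set.Icc (0:ℝ) 1 ∧
        0 < ν q {ω | G.HasInfiniteCluster ω}} := ⟨hp, pos_iff_ne_zero.2 h0⟩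
    have hbdd : BddBelow {q | q ∈ Set.Icc (0:ℝ) 1 ∧
        0 < ν q {ω | G.HasInfiniteCluster ω}} := ⟨0, fun x hx => hx.1.1⟩
    exact absurd (csInf_le hbdd hmem) (not_le.2 hsub)
  rw [ENNReal.tendsto_nhds_zero]
  intro ε hε
  obtain ⟨r, hr0, hrle⟩ : ∃ r : ℝ, 0 < r ∧ ENNReal.ofReal r ≤ ε / 2 := by
    rcases eq_or_ne (ε / 2) ⊤ with h | h
    · exact ⟨1, one_pos, by simp [h]⟩
    · exact ⟨(ε / 2).toReal, ENNReal.toReal_pos (ENNReal.half_pos hε.ne').ne' h,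
        le_of_eq (ENNReal.ofReal_toReal h)⟩
  have htend := BSaux.tendsto_measure_Ev (ρ := ρ) hdegG hνp hzero
  have hhalfpos : (0 : ENNReal) < ENNReal.ofReal α * (ε / 2) :=
    pos_iff_ne_zero.2 (mul_ne_zero (ENNReal.ofReal_pos.2 hα).ne'
      (ENNReal.half_pos hε.ne').ne')
  obtain ⟨J, hJ⟩ := (htend.eventually (gt_mem_nhds hhalfpos)).exists
  set eJ := ν p (BSaux.Ev G ρ J ∪ BSaux.InfCl G ρ) with heJdef
  have heJle : eJ ≤ ENNReal.ofReal α * (ε / 2) := le_of_lt hJ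
  have hn1 : ∀ᶠ n : ℕ in atTop, (J + 1 : ℝ) ≤ α * n := by
    have h := Tendsto.const_mul_atTop hα (tendsto_natCast_atTop_atTop (R := ℝ))
    exact h.eventually_ge_atTop _
  have hn2 : ∀ᶠ n : ℕ in atTop,
      1 - α * r < ({v : V n | BallIso (Gn n) v G ρ (J+1)}.ncard : ℝ) / n := by
    apply (hconv (J+1)).eventually (lt_mem_nhds ?_)
    nlinarith
  filter_upwards [hn1, hn2, eventually_ge_atTop 1] with n hJn hgoodn hn1'
  haveI : Fintype (Sym2 (V n)) := inferInstance
  haveI := (hμn n).1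
  have hnpos : (0:ℝ) < n := by exact_mod_cast hn1'
  have hEv_of : ∀ (v : V n) (ω : Sym2 (V n) → Bool),
      α * n ≤ ({w | (Gn n).OpenConn ω v w}.ncard : ℝ) → ω ∈ BSaux.Ev (Gn n) v J := by
    intro v ω hω
    apply BSaux.mem_Ev_of_large_cluster (fun u => Set.toFinite _)
    exact_mod_cast le_trans hJn hω
  -- Markov inequality
  have hmark : ((⌈α * n⌉₊ : ℕ) : ENNReal)
        * μn n {ω | ∃ v, α * n ≤ ({w | (Gn n).OpenConn ω v w}.ncard : ℝ)}
      ≤ ∑ v : V n, μn n {ω | α * n ≤ ({w | (Gn n).OpenConn ω v w}.ncard : ℝ)} := by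
    apply BSaux.markov
    intro ω hω
    obtain ⟨v₀, hv₀⟩ := hω
    have hsym : Symmetric ((Gn n).OpenAdj ω) := by
      intro a b hab
      exact ⟨hab.1.symm, by rw [Sym2.eq_swap]; exact hab.2⟩
    haveI : Std.Symm ((Gn n).OpenAdj ω) := ⟨fun x y h => hsym h⟩
    have hsymc : Symmetric (Relation.ReflTransGen ((Gn n).OpenAdj ω)) :=
      fun a b h => Std.Symm.symm a b h
    have hcl : ∀ w ∈ {w | (Gn n).OpenConn ω v₀ w},
        {w' | (Gn n).OpenConn ω w w'} = {w' | (Gn n).OpenConn ω v₀ w'} := by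
      intro w hw
      ext w'
      exact ⟨fun h => Relation.ReflTransGen.trans hw h,
        fun h => Relation.ReflTransGen.trans (hsymc hw) h⟩
    have hsubset : {w | (Gn n).OpenConn ω v₀ w} ⊆
        ↑(Finset.univ.filter (fun v => ω ∈
          {ω' | α * n ≤ ({w | (Gn n).OpenConn ω' v w}.ncard : ℝ)})) := by
      intro w hw
      simp only [Finset.coe_filter, Finset.mem_univ, true_and, Set.mem_setOf_eq]
      rw [hcl w hw]
      exact hv₀
    have h1 : ⌈α * n⌉₊ ≤ {w | (Gn n).OpenConn ω v₀ w}.ncard := Nat.ceil_le.2 hv₀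
    have h2 := Set.ncard_le_ncard hsubset (Set.toFinite _)
    rw [Set.ncard_coe_finset] at h2
    omega
  -- per-vertex bounds
  have hgoodv : ∀ v : V n, BallIso (Gn n) v G ρ (J+1) →
      μn n {ω | α * n ≤ ({w | (Gn n).OpenConn ω v w}.ncard : ℝ)} ≤ eJ := by
    intro v hv
    calc μn n {ω | α * n ≤ ({w | (Gn n).OpenConn ω v w}.ncard : ℝ)}
        ≤ μn n (BSaux.Ev (Gn n) v J) := measure_mono (fun ω hω => hEv_of v ω hω)
      _ = ν p (BSaux.Ev G ρ J) := BSaux.key_eq hdegG hv (hμn n) hνp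
      _ ≤ eJ := measure_mono Set.subset_union_left
  set good : ℕ := (Finset.univ.filter (fun v : V n => BallIso (Gn n) v G ρ (J+1))).card
    with hgooddef
  set bad : ℕ := (Finset.univ.filter (fun v : V n => ¬ BallIso (Gn n) v G ρ (J+1))).card
    with hbaddef
  have hsum : ∑ v : V n, μn n {ω | α * n ≤ ({w | (Gn n).OpenConn ω v w}.ncard : ℝ)}
      ≤ (good : ENNReal) * eJ + (bad : ENNReal) := by
    calc ∑ v : V n, μn n {ω | α * n ≤ ({w | (Gn n).OpenConn ω v w}.ncard : ℝ)}
        ≤ ∑ v : V n, (if BallIso (Gn n) v G ρ (J+1) then eJ else 1) := by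
          apply Finset.sum_le_sum
          intro v _
          by_cases hv : BallIso (Gn n) v G ρ (J+1)
          · rw [if_pos hv]; exact hgoodv v hv
          · rw [if_neg hv]; exact prob_le_one
      _ = (good : ENNReal) * eJ + (bad : ENNReal) := by
          rw [Finset.sum_ite, Finset.sum_const, Finset.sum_const,
            hgooddef, hbaddef, nsmul_eq_mul, nsmul_eq_mul, mul_one]
  have hcount : good + bad = n := by
    rw [hgooddef, hbaddef, Finset.card_filter_add_card_filter_not,
      Finset.card_univ, hcard n]
  have hgood_eq : ({v : V n | BallIso (Gn n) v G ρ (J+1)}.ncard : ℝ) = (good : ℝ) := by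
    rw [hgooddef, Set.ncard_eq_toFinset_card', Set.toFinset_setOf]
  have hbadR : (bad : ℝ) ≤ α * n * r := by
    rw [lt_div_iff₀ hnpos, hgood_eq] at hgoodn
    have hb : (bad : ℝ) = (n : ℝ) - (good : ℝ) := by
      have : ((good + bad : ℕ) : ℝ) = (n : ℝ) := by rw [hcount]
      push_cast at this
      linarith
    nlinarith
  have hbadE : (bad : ENNReal) ≤ ENNReal.ofReal (α * n) * (ε / 2) := by
    calc (bad : ENNReal) = ENNReal.ofReal ((bad : ℕ) : ℝ) := (ENNReal.ofReal_natCast _).symm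
      _ ≤ ENNReal.ofReal (α * n * r) := ENNReal.ofReal_le_ofReal hbadR
      _ = ENNReal.ofReal (α * n) * ENNReal.ofReal r := ENNReal.ofReal_mul (by positivity)
      _ ≤ ENNReal.ofReal (α * n) * (ε / 2) := mul_le_mul_right hrle _
  have hgoodE : (good : ENNReal) * eJ ≤ ENNReal.ofReal (α * n) * (ε / 2) := by
    have hgn : (good : ENNReal) ≤ (n : ENNReal) := by
      exact_mod_cast Nat.le.intro hcount
    calc (good : ENNReal) * eJ ≤ (n : ENNReal) * eJ := mul_le_mul_left hgn _
      _ ≤ (n : ENNReal) * (ENNReal.ofReal α * (ε / 2)) := mul_le_mul_right heJle _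
      _ = ENNReal.ofReal (α * n) * (ε / 2) := by
          rw [ENNReal.ofReal_mul (le_of_lt hα), ENNReal.ofReal_natCast]
          ring
  have hofm : ENNReal.ofReal (α * n) ≤ ((⌈α * n⌉₊ : ℕ) : ENNReal) := by
    rw [← ENNReal.ofReal_natCast]
    exact ENNReal.ofReal_le_ofReal (Nat.le_ceil _)
  have hm0 : ((⌈α * n⌉₊ : ℕ) : ENNReal) ≠ 0 := by
    have h : 0 < ⌈α * n⌉₊ := Nat.ceil_pos.2 (by positivity)
    exact_mod_cast h.ne'
  have hfinal : ((⌈α * n⌉₊ : ℕ) : ENNReal)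
        * μn n {ω | ∃ v, α * n ≤ ({w | (Gn n).OpenConn ω v w}.ncard : ℝ)}
      ≤ ((⌈α * n⌉₊ : ℕ) : ENNReal) * ε := by
    calc ((⌈α * n⌉₊ : ℕ) : ENNReal)
          * μn n {ω | ∃ v, α * n ≤ ({w | (Gn n).OpenConn ω v w}.ncard : ℝ)}
        ≤ ∑ v : V n, μn n {ω | α * n ≤ ({w | (Gn n).OpenConn ω v w}.ncard : ℝ)} := hmark
      _ ≤ (good : ENNReal) * eJ + (bad : ENNReal) := hsum
      _ ≤ ENNReal.ofReal (α * n) * (ε / 2) + ENNReal.ofReal (α * n) * (ε / 2) :=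
          add_le_add hgoodE hbadE
      _ = ENNReal.ofReal (α * n) * ε := by rw [← mul_add, ENNReal.add_halves]
      _ ≤ ((⌈α * n⌉₊ : ℕ) : ENNReal) * ε := mul_le_mul_left hofm _
  exact (ENNReal.mul_le_mul_iff_right hm0 (ENNReal.natCast_ne_top _)).1 hfinal
end
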